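/- arXiv:1508.05546 — 6 statements merged into one kernel-verified Lean document; each statement's English description precedes it below -/
import Mathlib

section
/- Let K be an algebraically closed field of characteristic zero, n ≥ 1, s ≥ 1, and let ℓ_1, …, ℓ_{2s} be linear forms in K[x_0,…,x_n] whose linear span has dimension min(2s, n+1) (the generic situation). Then the subspace Σ_{i=1}^{2s} ℓ_i·R_1 of the space R_2 of quadratic forms has dimension C(n+2,2) − C(n+2−min(2s,n+1), 2); in particular, if 2s ≤ n+1 this dimension equals s(2n+1) − 2s(s−1), and if 2s ≥ n+1 it equals C(n+2,2). -/
set_option maxHeartbeats 1000000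
open MvPolynomial
open Finsupp Module Pointwise

-- ===== combinatorial lemmas (verified) =====
lemma degree_toMultiset {σ : Type*} (d : σ →₀ ℕ) :
    Multiset.card (Finsupp.toMultiset d) = d.degree := by
  rw [Finsupp.card_toMultiset]; rfl

lemma toMultiset_inj {σ : Type*} [DecidableEq σ] {d e : σ →₀ ℕ}
    (h : d.toMultiset = e.toMultiset) : d = e := by
  have := congrArg Multiset.toFinsupp h
  rwa [Finsupp.toMultiset_toFinsupp, Finsupp.toMultiset_toFinsupp] at this

lemma degree_one_eq {σ : Type*} [DecidableEq σ] {d : σ →₀ ℕ} (h : d.degree = 1) :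
    ∃ i, d = Finsupp.single i 1 := by
  have h1 : Multiset.card d.toMultiset = 1 := by rw [degree_toMultiset, h]
  obtain ⟨i, hi⟩ := Multiset.card_eq_one.mp h1
  refine ⟨i, toMultiset_inj ?_⟩
  rw [hi, Finsupp.toMultiset_single, one_nsmul]

lemma degree_two_eq {σ : Type*} [DecidableEq σ] {d : σ →₀ ℕ} (h : d.degree = 2) :
    ∃ i j, d = Finsupp.single i 1 + Finsupp.single j 1 := by
  have h1 : Multiset.card d.toMultiset = 2 := by rw [degree_toMultiset, h]
  obtain ⟨i, j, hij⟩ := Multiset.card_eq_two.mp h1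
  refine ⟨i, j, toMultiset_inj ?_⟩
  rw [hij, Finsupp.toMultiset_add, Finsupp.toMultiset_single, Finsupp.toMultiset_single,
    one_nsmul, one_nsmul]
  rfl

lemma degree_two_eq' {σ : Type*} [DecidableEq σ] {d : σ →₀ ℕ} (h : d.degree = 2)
    {i : σ} (hi : d i ≠ 0) : ∃ j, d = Finsupp.single i 1 + Finsupp.single j 1 := by
  obtain ⟨a, b, hab⟩ := degree_two_eq h
  rcases eq_or_ne i a with rfl | ha
  · exact ⟨b, hab⟩
  rcases eq_or_ne i b with rfl | hb
  · exact ⟨a, by rw [hab, add_comm]⟩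
  · exfalso; apply hi; rw [hab]; simp [Finsupp.single_apply, Ne.symm ha, Ne.symm hb]

lemma card_deg_two (σ : Type*) [Fintype σ] [DecidableEq σ] :
    Nat.card {d : σ →₀ ℕ // d.degree = 2} = (Fintype.card σ + 1).choose 2 := by
  have e : {d : σ →₀ ℕ // d.degree = 2} ≃ Sym σ 2 :=
    { toFun := fun d => ⟨d.1.toMultiset, by rw [degree_toMultiset, d.2]⟩
      invFun := fun s => ⟨Multiset.toFinsupp s.1, by
        rw [← degree_toMultiset, Multiset.toFinsupp_toMultiset]; exact s.2⟩
      left_inv := fun d => by ext : 1; simp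
      right_inv := fun s => by ext : 1; simp [Multiset.toFinsupp_toMultiset] }
  rw [Nat.card_congr e, Nat.card_eq_fintype_card, Sym.card_sym_eq_choose]
  congr 1

lemma degree_subtypeDomain {σ : Type*} (s : Set σ) [DecidablePred (· ∈ s)] (f : σ →₀ ℕ)
    (h : ↑f.support ⊆ s) : (f.subtypeDomain (· ∈ s)).degree = f.degree := by
  rw [Finsupp.degree_apply, Finsupp.degree_apply]
  rw [Finsupp.support_subtypeDomain]
  simp only [Finsupp.subtypeDomain_apply]
  rw [Finset.sum_subtype_eq_sum_filter]
  rw [Finset.filter_true_of_mem (fun x hx => h hx)]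

lemma card_deg_two_supported (σ : Type*) [Fintype σ] [DecidableEq σ] (s : Set σ)
    [DecidablePred (· ∈ s)] :
    Nat.card {d : σ →₀ ℕ // d.degree = 2 ∧ ↑d.support ⊆ s} =
      (Fintype.card s + 1).choose 2 := by
  have e : {d : σ →₀ ℕ // d.degree = 2 ∧ ↑d.support ⊆ s} ≃ {d : s →₀ ℕ // d.degree = 2} :=
    { toFun := fun d => ⟨Finsupp.subtypeDomain (· ∈ s) d.1, by
        rw [degree_subtypeDomain s d.1 d.2.2]; exact d.2.1⟩
      invFun := fun d => ⟨d.1.extendDomain, by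
        have hsupp : ↑d.1.extendDomain.support ⊆ s := by
          intro x hx
          exact Finsupp.support_extendDomain_subset d.1 hx
        refine ⟨?_, hsupp⟩
        have h3 := degree_subtypeDomain s d.1.extendDomain hsupp
        rw [Finsupp.subtypeDomain_extendDomain] at h3
        rw [← h3]; exact d.2⟩
      left_inv := fun d => Subtype.ext (Finsupp.extendDomain_subtypeDomain d.1
        (fun a ha => d.2.2 ha))
      right_inv := fun d => Subtype.ext (Finsupp.subtypeDomain_extendDomain d.1) }
  rw [Nat.card_congr e, card_deg_two]

lemma card_D (σ : Type*) [Fintype σ] [DecidableEq σ] (t : Set σ) [DecidablePred (· ∈ t)] :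
    Nat.card {d : σ →₀ ℕ // d.degree = 2 ∧ ∃ i ∈ t, d i ≠ 0} =
      (Fintype.card σ + 1).choose 2 - (Fintype.card ↥tᶜ + 1).choose 2 := by
  classical
  set T : Set (σ →₀ ℕ) := {d | d.degree = 2} with hT
  set T₀ : Set (σ →₀ ℕ) := {d | d.degree = 2 ∧ ↑d.support ⊆ tᶜ} with hT0
  have hsub : T₀ ⊆ T := fun d hd => hd.1
  have hfin : T.Finite := by
    apply (Finsupp.finite_of_degree_le 2).subset
    intro d hd; exact le_of_eq hd
  have hiff : ∀ d : σ →₀ ℕ, (∃ i ∈ t, d i ≠ 0) ↔ ¬ (↑d.support ⊆ tᶜ) := by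
    intro d
    constructor
    · rintro ⟨i, hit, hdi⟩ hss
      exact (hss (by simpa using hdi)) hit
    · intro h
      rw [Set.not_subset] at h
      obtain ⟨i, hi, hi2⟩ := h
      exact ⟨i, by simpa using hi2, by simpa using hi⟩
  have hset : {d : σ →₀ ℕ | d.degree = 2 ∧ ∃ i ∈ t, d i ≠ 0} = T \ T₀ := by
    ext d
    simp only [Set.mem_setOf_eq, Set.mem_diff, hT, hT0, Set.mem_setOf_eq, hiff d]
    tauto
  have h1 : Nat.card {d : σ →₀ ℕ // d.degree = 2 ∧ ∃ i ∈ t, d i ≠ 0}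
      = (T \ T₀).ncard := by
    rw [← Nat.card_coe_set_eq, ← hset]; rfl
  rw [h1, Set.ncard_diff hsub (hfin.subset hsub), ← Nat.card_coe_set_eq,
    ← Nat.card_coe_set_eq]
  rw [show Nat.card ↥T = (Fintype.card σ + 1).choose 2 from card_deg_two σ,
    show Nat.card ↥T₀ = (Fintype.card ↥tᶜ + 1).choose 2 from card_deg_two_supported σ tᶜ]

lemma choose_two_add (x y : ℕ) : (x + y).choose 2 = x.choose 2 + y.choose 2 + x * y := by
  induction y with
  | zero => simp
  | succ y ih =>
      have h1 : x + (y + 1) = (x + y) + 1 := by ring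
      have h2 : (y + 1).choose 2 = y.choose 1 + y.choose 2 := Nat.choose_succ_succ y 1
      rw [h1, Nat.choose_succ_succ (x + y) 1, h2, ih, Nat.choose_one_right,
        Nat.choose_one_right, Nat.mul_succ]
      ring

lemma card_fin_not_lt (N m : ℕ) (hm : m ≤ N) :
    Fintype.card {i : Fin N // ¬ (i : ℕ) < m} = N - m := by
  rw [Fintype.card_subtype_compl]
  congr 1
  · simp
  · rw [Fintype.card_eq.mpr ⟨{
      toFun := fun i => (⟨i.1.1, i.2⟩ : Fin m)
      invFun := fun j => ⟨⟨j.1, lt_of_lt_of_le j.2 hm⟩, j.2⟩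
      left_inv := fun i => rfl
      right_inv := fun j => rfl }⟩, Fintype.card_fin]

lemma homog_one_span (σ : Type) [DecidableEq σ] (K : Type*) [Field K] :
    homogeneousSubmodule σ K 1 = Submodule.span K (Set.range (X : σ → MvPolynomial σ K)) := by
  apply le_antisymm
  · intro p hp
    rw [mem_homogeneousSubmodule] at hp
    rw [← p.support_sum_monomial_coeff]
    apply Submodule.sum_mem
    intro d hd
    have hdeg : d.degree = 1 := by
      have := hp (MvPolynomial.mem_support_iff.mp hd)
      rw [Finsupp.degree_eq_weight_one]; exact this
    obtain ⟨i, rfl⟩ := degree_one_eq hdeg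
    have : (monomial (Finsupp.single i 1)) (MvPolynomial.coeff (Finsupp.single i 1) p)
        = (MvPolynomial.coeff (Finsupp.single i 1) p) • X i := by
      rw [smul_eq_C_mul, X, C_mul_monomial, mul_one]
    rw [this]
    exact Submodule.smul_mem _ _ (Submodule.subset_span ⟨i, rfl⟩)
  · rw [Submodule.span_le]
    rintro _ ⟨i, rfl⟩
    exact isHomogeneous_X K i

lemma exists_auto (K V : Type*) [Field K] [AddCommGroup V] [Module K V] [FiniteDimensional K V]
    (p q : Submodule K V) (h : finrank K p = finrank K q) :
    ∃ e : V ≃ₗ[K] V, Submodule.map (e : V →ₗ[K] V) p = q := by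
  obtain ⟨p', hp'⟩ := Submodule.exists_isCompl p
  obtain ⟨q', hq'⟩ := Submodule.exists_isCompl q
  have h1 := Submodule.finrank_add_eq_of_isCompl hp'
  have h2 := Submodule.finrank_add_eq_of_isCompl hq'
  have hr : finrank K p' = finrank K q' := by omega
  let u : p ≃ₗ[K] q := LinearEquiv.ofFinrankEq _ _ h
  let v : p' ≃ₗ[K] q' := LinearEquiv.ofFinrankEq _ _ hr
  let e := (Submodule.prodEquivOfIsCompl p p' hp').symm.trans
    ((u.prodCongr v).trans (Submodule.prodEquivOfIsCompl q q' hq'))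
  have he : ∀ x (hx : x ∈ p), e x = ↑(u ⟨x, hx⟩) := by
    intro x hx
    show (Submodule.prodEquivOfIsCompl q q' hq') ((u.prodCongr v)
      ((Submodule.prodEquivOfIsCompl p p' hp').symm x)) = _
    rw [show (Submodule.prodEquivOfIsCompl p p' hp').symm x = ((⟨x, hx⟩ : ↥p), (0 : ↥p')) from
      Submodule.prodEquivOfIsCompl_symm_apply_left p p' hp' (⟨x, hx⟩ : ↥p)]
    simp [Submodule.coe_prodEquivOfIsCompl', LinearEquiv.prodCongr_apply]
  have he' : ∀ y (hy : y ∈ q), e.symm y = ↑(u.symm ⟨y, hy⟩) := by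
    intro y hy
    show (Submodule.prodEquivOfIsCompl p p' hp') ((u.prodCongr v).symm
      ((Submodule.prodEquivOfIsCompl q q' hq').symm y)) = _
    rw [show (Submodule.prodEquivOfIsCompl q q' hq').symm y = ((⟨y, hy⟩ : ↥q), (0 : ↥q')) from
      Submodule.prodEquivOfIsCompl_symm_apply_left q q' hq' (⟨y, hy⟩ : ↥q)]
    simp [Submodule.coe_prodEquivOfIsCompl', LinearEquiv.prodCongr_symm, LinearEquiv.prodCongr_apply]
  refine ⟨e, le_antisymm ?_ ?_⟩
  · rintro _ ⟨x, hx, rfl⟩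
    rw [show (e : V →ₗ[K] V) x = e x from rfl, he x hx]
    exact (u ⟨x, hx⟩).2
  · intro y hy
    refine ⟨e.symm y, ?_, by simp⟩
    rw [he' y hy]
    exact (u.symm ⟨y, hy⟩).2

-- ===== new material =====

lemma X_linearIndependent (σ : Type) [DecidableEq σ] (K : Type*) [Field K] :
    LinearIndependent K (X : σ → MvPolynomial σ K) := by
  have h := (MvPolynomial.basisMonomials σ K).linearIndependent
  have h2 := h.comp (fun i : σ => Finsupp.single i 1)
    (Finsupp.single_left_injective one_ne_zero)
  have hx : (X : σ → MvPolynomial σ K) =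
      (⇑(MvPolynomial.basisMonomials σ K) ∘ fun i : σ => Finsupp.single i 1) := by
    funext i
    show X i = MvPolynomial.basisMonomials σ K (Finsupp.single i 1)
    rw [show ⇑(MvPolynomial.basisMonomials σ K)
        = fun s => (monomial s 1 : MvPolynomial σ K) from MvPolynomial.coe_basisMonomials σ K]
    rfl
  rw [hx]
  exact h2

lemma degree_add' {σ : Type*} (a b : σ →₀ ℕ) : (a + b).degree = a.degree + b.degree := by
  rw [← degree_toMultiset, ← degree_toMultiset, ← degree_toMultiset, Finsupp.toMultiset_add]
  simp

lemma degree_single' {σ : Type*} (i : σ) : (Finsupp.single i 1 : σ →₀ ℕ).degree = 1 := by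
  rw [← degree_toMultiset, Finsupp.toMultiset_single, one_nsmul]
  simp

lemma coord (K : Type*) [Field K] (n m' : ℕ) (hm : m' ≤ n + 1) :
    finrank K ↥(Submodule.span K
        ((X '' {i : Fin (n+1) | (i:ℕ) < m'}) : Set (MvPolynomial (Fin (n+1)) K)) *
        homogeneousSubmodule (Fin (n+1)) K 1)
      = (n+2).choose 2 - (n+2-m').choose 2 := by
  classical
  set t : Set (Fin (n+1)) := {i | (i:ℕ) < m'} with ht
  set D : Set ((Fin (n+1)) →₀ ℕ) := {d | d.degree = 2 ∧ ∃ i ∈ t, d i ≠ 0} with hD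
  rw [homog_one_span (Fin (n+1)) K, Submodule.span_mul_span]
  have hset : ((X '' t) : Set (MvPolynomial (Fin (n+1)) K)) *
      (Set.range (X : Fin (n+1) → MvPolynomial (Fin (n+1)) K)) =
      (fun d => (monomial d 1 : MvPolynomial (Fin (n+1)) K)) '' D := by
    ext z
    constructor
    · rintro ⟨_, ⟨i, hit, rfl⟩, _, ⟨j, rfl⟩, rfl⟩
      refine ⟨Finsupp.single i 1 + Finsupp.single j 1, ⟨?_, ⟨i, hit, ?_⟩⟩, ?_⟩
      · rw [degree_add', degree_single', degree_single']
      · rw [Finsupp.add_apply, Finsupp.single_eq_same]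
        omega
      · show (monomial _) 1 = X i * X j
        rw [X, X, monomial_mul, one_mul]
    · rintro ⟨d, ⟨hdeg, i, hit, hdi⟩, rfl⟩
      obtain ⟨j, rfl⟩ := degree_two_eq' hdeg hdi
      refine ⟨X i, ⟨i, hit, rfl⟩, X j, ⟨j, rfl⟩, ?_⟩
      show X i * X j = (monomial _) 1
      rw [X, X, monomial_mul, one_mul]
  rw [hset]
  have hDfin : D.Finite := by
    apply (Finsupp.finite_of_degree_le 2).subset
    intro d hd; exact le_of_eq hd.1
  haveI : Fintype D := hDfin.fintype
  have himg : (fun d => (monomial d 1 : MvPolynomial (Fin (n+1)) K)) '' D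
      = Set.range (fun d : D => (monomial (d : (Fin (n+1)) →₀ ℕ) 1 :
        MvPolynomial (Fin (n+1)) K)) := by
    rw [Set.image_eq_range]
  rw [himg]
  have hli : LinearIndependent K (fun d : D => (monomial (d : (Fin (n+1)) →₀ ℕ) 1 :
      MvPolynomial (Fin (n+1)) K)) := by
    have h := (MvPolynomial.basisMonomials (Fin (n+1)) K).linearIndependent
    have h2 := h.comp (fun d : D => (d : (Fin (n+1)) →₀ ℕ)) Subtype.val_injective
    have hx : (fun d : D => (monomial (d : (Fin (n+1)) →₀ ℕ) 1 :
        MvPolynomial (Fin (n+1)) K)) =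
        (⇑(MvPolynomial.basisMonomials (Fin (n+1)) K) ∘ fun d : D => (d : (Fin (n+1)) →₀ ℕ)) := by
      funext d
      show _ = MvPolynomial.basisMonomials (Fin (n+1)) K (d : (Fin (n+1)) →₀ ℕ)
      rw [show ⇑(MvPolynomial.basisMonomials (Fin (n+1)) K)
          = fun s => (monomial s 1 : MvPolynomial (Fin (n+1)) K) from
        MvPolynomial.coe_basisMonomials (Fin (n+1)) K]
    rw [hx]
    exact h2
  rw [finrank_span_eq_card hli]
  have hcard : Fintype.card D = Nat.card {d : (Fin (n+1)) →₀ ℕ //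
      d.degree = 2 ∧ ∃ i ∈ t, d i ≠ 0} := by
    rw [← Nat.card_eq_fintype_card]
    rfl
  rw [hcard, card_D (Fin (n+1)) t, Fintype.card_fin]
  have h1 : Fintype.card ↥tᶜ = n + 1 - m' := by
    rw [Fintype.card_congr (Equiv.subtypeEquivRight (q := fun i : Fin (n+1) => ¬ (i:ℕ) < m')
      (fun i => by simp [ht]))]
    exact card_fin_not_lt (n+1) m' hm
  rw [h1, show n + 1 - m' + 1 = n + 2 - m' by omega]

lemma card_fin_lt (N m : ℕ) (hm : m ≤ N) :
    Fintype.card {i : Fin N // (i : ℕ) < m} = m := by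
  rw [Fintype.card_eq.mpr ⟨{
    toFun := fun i => (⟨i.1.1, i.2⟩ : Fin m)
    invFun := fun j => ⟨⟨j.1, lt_of_lt_of_le j.2 hm⟩, j.2⟩
    left_inv := fun i => rfl
    right_inv := fun j => rfl }⟩, Fintype.card_fin]

lemma main_dim (K : Type*) [Field K] (n m' : ℕ) (hm : m' ≤ n + 1)
    (W : Submodule K (MvPolynomial (Fin (n+1)) K))
    (hWle : W ≤ homogeneousSubmodule (Fin (n+1)) K 1)
    (hWrank : finrank K W = m') :
    finrank K ↥(W * homogeneousSubmodule (Fin (n+1)) K 1)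
      = (n+2).choose 2 - (n+2-m').choose 2 := by
  classical
  set L := homogeneousSubmodule (Fin (n+1)) K 1 with hLdef
  have hLspan : L = Submodule.span K (Set.range (X : Fin (n+1) → MvPolynomial (Fin (n+1)) K)) :=
    homog_one_span (Fin (n+1)) K
  let Xf : Fin (n+1) → L := fun i => ⟨X i, isHomogeneous_X K i⟩
  have hXfcoe : ∀ i, (Xf i : MvPolynomial (Fin (n+1)) K) = X i := fun i => rfl
  have hXfspan : Submodule.span K (Set.range Xf) = ⊤ := by
    apply Submodule.map_injective_of_injective (Submodule.injective_subtype L)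
    rw [Submodule.map_span, Submodule.map_top, Submodule.range_subtype]
    have himg : (L.subtype '' Set.range Xf) =
        Set.range (X : Fin (n+1) → MvPolynomial (Fin (n+1)) K) := by
      ext z; constructor
      · rintro ⟨_, ⟨i, rfl⟩, rfl⟩; exact ⟨i, rfl⟩
      · rintro ⟨i, rfl⟩; exact ⟨Xf i, ⟨i, rfl⟩, rfl⟩
    rw [himg, ← hLspan]
  haveI : FiniteDimensional K L := by
    rw [hLdef, homog_one_span (Fin (n+1)) K]
    exact FiniteDimensional.span_of_finite K (Set.finite_range _)
  set t : Set (Fin (n+1)) := {i | (i:ℕ) < m'} with ht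
  set V0 : Submodule K (MvPolynomial (Fin (n+1)) K) := Submodule.span K (X '' t) with hV0
  set V0' : Submodule K L := Submodule.span K (Xf '' t) with hV0'
  set W' : Submodule K L := W.comap L.subtype with hW'
  have hmapV0' : Submodule.map L.subtype V0' = V0 := by
    rw [hV0', Submodule.map_span, Set.image_image]
    rfl
  have hmapW' : Submodule.map L.subtype W' = W := by
    rw [hW', Submodule.map_comap_subtype, inf_eq_right.mpr hWle]
  have hrankW' : finrank K W' = m' := by
    rw [← hWrank]
    exact LinearEquiv.finrank_eq (Submodule.comapSubtypeEquivOfLe hWle)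
  have hXli : LinearIndependent K (X : Fin (n+1) → MvPolynomial (Fin (n+1)) K) :=
    X_linearIndependent (Fin (n+1)) K
  have hXfli : LinearIndependent K Xf := by
    apply LinearIndependent.of_comp L.subtype
    exact hXli
  have hrankV0' : finrank K V0' = m' := by
    have himg2 : (Xf '' t) = Set.range (fun i : t => Xf i) := Set.image_eq_range _ _
    rw [hV0', himg2]
    exact (finrank_span_eq_card (hXfli.comp (fun i : t => (i : Fin (n+1)))
      Subtype.val_injective)).trans (card_fin_lt (n+1) m' hm)
  obtain ⟨e, he⟩ := exists_auto K L V0' W' (by rw [hrankV0', hrankW'])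
  set g : Fin (n+1) → MvPolynomial (Fin (n+1)) K :=
    fun i => ((e (Xf i) : L) : MvPolynomial (Fin (n+1)) K) with hg
  set h : Fin (n+1) → MvPolynomial (Fin (n+1)) K :=
    fun i => ((e.symm (Xf i) : L) : MvPolynomial (Fin (n+1)) K) with hh
  have hagree_h : ∀ z : L, aeval h (z : MvPolynomial (Fin (n+1)) K)
      = ((e.symm z : L) : MvPolynomial (Fin (n+1)) K) := by
    have hFG : ((aeval h).toLinearMap.comp L.subtype : L →ₗ[K] MvPolynomial (Fin (n+1)) K)
        = L.subtype.comp (e.symm : L →ₗ[K] L) := by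
      apply LinearMap.ext_on hXfspan
      rintro _ ⟨i, rfl⟩
      show aeval h (X i) = _
      rw [aeval_X]
      rfl
    intro z
    exact congrFun (congrArg (fun f : L →ₗ[K] MvPolynomial (Fin (n+1)) K => (f : L → _)) hFG) z
  have hagree_g : ∀ z : L, aeval g (z : MvPolynomial (Fin (n+1)) K)
      = ((e z : L) : MvPolynomial (Fin (n+1)) K) := by
    have hFG : ((aeval g).toLinearMap.comp L.subtype : L →ₗ[K] MvPolynomial (Fin (n+1)) K)
        = L.subtype.comp (e : L →ₗ[K] L) := by
      apply LinearMap.ext_on hXfspan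
      rintro _ ⟨i, rfl⟩
      show aeval g (X i) = _
      rw [aeval_X]
      rfl
    intro z
    exact congrFun (congrArg (fun f : L →ₗ[K] MvPolynomial (Fin (n+1)) K => (f : L → _)) hFG) z
  have hcomp1 : (aeval h).comp (aeval g) = AlgHom.id K (MvPolynomial (Fin (n+1)) K) := by
    rw [comp_aeval]
    have : (fun i => aeval h (g i)) = (X : Fin (n+1) → MvPolynomial (Fin (n+1)) K) := by
      funext i
      rw [hg]
      show aeval h ((e (Xf i) : L) : MvPolynomial (Fin (n+1)) K) = X i
      rw [hagree_h (e (Xf i)), LinearEquiv.symm_apply_apply]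
    rw [this, aeval_X_left]
  have hcomp2 : (aeval g).comp (aeval h) = AlgHom.id K (MvPolynomial (Fin (n+1)) K) := by
    rw [comp_aeval]
    have : (fun i => aeval g (h i)) = (X : Fin (n+1) → MvPolynomial (Fin (n+1)) K) := by
      funext i
      rw [hh]
      show aeval g ((e.symm (Xf i) : L) : MvPolynomial (Fin (n+1)) K) = X i
      rw [hagree_g (e.symm (Xf i)), LinearEquiv.apply_symm_apply]
    rw [this, aeval_X_left]
  have hinj : Function.Injective (aeval g : MvPolynomial (Fin (n+1)) K →ₐ[K]
      MvPolynomial (Fin (n+1)) K) := by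
    intro x y hxy
    have h1 := congrArg (aeval h) hxy
    rw [← AlgHom.comp_apply, ← AlgHom.comp_apply, hcomp1] at h1
    simpa using h1
  have hmapV0 : Submodule.map (aeval g).toLinearMap V0 = W := by
    rw [hV0, Submodule.map_span, ← hmapW', ← he, hV0', Submodule.map_span, Submodule.map_span,
      Set.image_image, Set.image_image, Set.image_image]
    congr 1
    apply Set.image_congr
    intro i _
    show aeval g (X i) = _
    rw [aeval_X]
    rfl
  have hmapL : Submodule.map (aeval g).toLinearMap L = L := by
    conv_lhs => rw [hLspan]
    rw [Submodule.map_span]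
    have h1 : ((aeval g).toLinearMap '' Set.range (X : Fin (n+1) → MvPolynomial (Fin (n+1)) K))
        = Set.range g := by
      rw [← Set.range_comp]
      exact congrArg Set.range (funext fun i => by
        show aeval g (X i) = g i
        rw [aeval_X])
    rw [h1]
    have h2 : Set.range g = ⇑L.subtype '' (⇑(e : ↥L →ₗ[K] ↥L) '' Set.range Xf) := by
      rw [Set.image_image, ← Set.range_comp]
      rfl
    rw [h2, ← Submodule.map_span, ← Submodule.map_span, hXfspan, Submodule.map_top,
      LinearEquiv.range, Submodule.map_top, Submodule.range_subtype]
  have hmul : Submodule.map (aeval g).toLinearMap (V0 * L) = W * L := by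
    rw [Submodule.map_mul V0 L (aeval g), hmapV0, hmapL]
  have hfr : finrank K ↥(W * L) = finrank K ↥(V0 * L) := by
    rw [← hmul]
    exact (LinearEquiv.finrank_eq (Submodule.equivMapOfInjective
      (aeval g).toLinearMap hinj (V0 * L))).symm
  rw [hfr, hV0]
  exact coord K n m' hm


/-- For linear forms `ℓ 1, …, ℓ 2s` in `K[x_0,…,x_n]` whose linear span has
dimension `min (2s) (n+1)` (the generic situation), the subspace `Σ ℓ_i · R_1` of `R_2` has
dimension `C(n+2,2) − C(n+2−min(2s,n+1),2)`; in particular it equals `s(2n+1) − 2s(s−1)` if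
`2s ≤ n+1` and `C(n+2,2)` if `2s ≥ n+1`. -/
theorem stmt0 (K : Type*) [Field K] [IsAlgClosed K] [CharZero K]
    (n s : ℕ) (hn : 1 ≤ n) (hs : 1 ≤ s)
    (ℓ : Fin (2 * s) → MvPolynomial (Fin (n + 1)) K)
    (hhom : ∀ i, (ℓ i).IsHomogeneous 1)
    (hspan : Module.finrank K ↥(Submodule.span K (Set.range ℓ)) = min (2 * s) (n + 1)) :
    Module.finrank K ↥(⨆ i : Fin (2 * s),
        Submodule.map (LinearMap.mulLeft K (ℓ i))
          (homogeneousSubmodule (Fin (n + 1)) K 1))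
      = (n + 2).choose 2 - (n + 2 - min (2 * s) (n + 1)).choose 2 ∧
    (2 * s ≤ n + 1 →
      Module.finrank K ↥(⨆ i : Fin (2 * s),
          Submodule.map (LinearMap.mulLeft K (ℓ i))
            (homogeneousSubmodule (Fin (n + 1)) K 1))
        = s * (2 * n + 1) - 2 * s * (s - 1)) ∧
    (n + 1 ≤ 2 * s →
      Module.finrank K ↥(⨆ i : Fin (2 * s),
          Submodule.map (LinearMap.mulLeft K (ℓ i))
            (homogeneousSubmodule (Fin (n + 1)) K 1))
        = (n + 2).choose 2) := by
  have hsup : (⨆ i : Fin (2 * s), Submodule.map (LinearMap.mulLeft K (ℓ i))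
        (homogeneousSubmodule (Fin (n + 1)) K 1))
      = Submodule.span K (Set.range ℓ) * homogeneousSubmodule (Fin (n + 1)) K 1 := by
    rw [Submodule.span_range_eq_iSup, Submodule.iSup_mul]
    apply iSup_congr
    intro i
    ext z
    simp only [Submodule.mem_map, Submodule.mem_span_singleton_mul, LinearMap.mulLeft_apply]
  have hWle : Submodule.span K (Set.range ℓ) ≤ homogeneousSubmodule (Fin (n + 1)) K 1 := by
    rw [Submodule.span_le]
    rintro _ ⟨i, rfl⟩
    exact hhom i
  have hmle : min (2 * s) (n + 1) ≤ n + 1 := min_le_right _ _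
  have hmain : Module.finrank K ↥(⨆ i : Fin (2 * s),
        Submodule.map (LinearMap.mulLeft K (ℓ i))
          (homogeneousSubmodule (Fin (n + 1)) K 1))
      = (n + 2).choose 2 - (n + 2 - min (2 * s) (n + 1)).choose 2 := by
    rw [hsup]
    exact main_dim K n (min (2 * s) (n + 1)) hmle _ hWle hspan
  refine ⟨hmain, fun h2s => ?_, fun h2s => ?_⟩
  · rw [hmain, min_eq_left h2s]
    obtain ⟨c, hc⟩ : ∃ c, n + 1 = 2 * s + c := ⟨n + 1 - 2 * s, by omega⟩
    obtain ⟨s', rfl⟩ : ∃ s', s = s' + 1 := ⟨s - 1, by omega⟩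
    have hn' : n = 2 * s' + 1 + c := by omega
    subst hn'
    have h1 : 2 * s' + 1 + c + 2 = (c + 1) + 2 * (s' + 1) := by ring
    have h2 : 2 * s' + 1 + c + 2 - 2 * (s' + 1) = c + 1 := by omega
    rw [h2, h1, choose_two_add (c + 1) (2 * (s' + 1))]
    have h3 : (2 * (s' + 1)).choose 2 = (s' + 1) * (2 * s' + 1) := by
      rw [Nat.choose_two_right,
        show 2 * (s' + 1) * (2 * (s' + 1) - 1) = 2 * ((s' + 1) * (2 * s' + 1)) by
          rw [show 2 * (s' + 1) - 1 = 2 * s' + 1 by omega]; ring]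
      exact Nat.mul_div_cancel_left _ (by norm_num)
    rw [h3]
    have h4 : (s' + 1) * (2 * (2 * s' + 1 + c) + 1)
        = 2 * (s' + 1) * (s' + 1 - 1) + ((s' + 1) * (2 * s' + 1) + (c + 1) * (2 * (s' + 1))) := by
      rw [show s' + 1 - 1 = s' by omega]
      ring
    rw [h4]
    generalize (c + 1).choose 2 = p
    generalize (s' + 1) * (2 * s' + 1) = q
    generalize (c + 1) * (2 * (s' + 1)) = r
    generalize 2 * (s' + 1) * s' = y
    omega
  · rw [hmain, min_eq_right h2s, show n + 2 - (n + 1) = 1 by omega,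
      show Nat.choose 1 2 = 0 from Nat.choose_eq_zero_of_lt (by norm_num), Nat.sub_zero]
end

section
/- Let K be an algebraically closed field of characteristic zero, n ≥ 1, d ≥ 1, and let ℓ_1, …, ℓ_d be nonzero linear forms in K[x_0,…,x_n]. Then the subspace Σ_{j=1}^d π_j(ℓ)·R_1 of the space R_d of degree-d forms has dimension at most dn + 1, where π_j(ℓ) = ∏_{m≠j} ℓ_m. -/
open MvPolynomial

private lemma degree_one_single {σ : Type*} (d : σ →₀ ℕ) (hd' : (Finsupp.weight 1) d = 1) :
    ∃ i, d = Finsupp.single i 1 := by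
  classical
  have hd : ∑ i ∈ d.support, d i = 1 := by
    rw [← hd']; show _ = Finsupp.weight (fun _ => 1) d; rw [← Finsupp.degree_eq_weight_one]; rfl
  have hcard : d.support.card ≤ 1 := by
    calc d.support.card = ∑ _i ∈ d.support, 1 := by simp
    _ ≤ ∑ i ∈ d.support, d i := Finset.sum_le_sum fun i hi =>
        Nat.one_le_iff_ne_zero.2 (Finsupp.mem_support_iff.1 hi)
    _ = 1 := hd
  have hne : d.support.Nonempty := by
    rw [Finset.nonempty_iff_ne_empty]
    intro h
    rw [Finset.sum_congr h (fun _ _ => rfl)] at hd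
    simp at hd
  obtain ⟨i, hi⟩ := Finset.card_eq_one.1 (le_antisymm hcard hne.card_pos)
  refine ⟨i, ?_⟩
  have hdi : d i = 1 := by rw [hi] at hd; simpa using hd
  have := (Finsupp.support_eq_singleton.1 hi).2
  rwa [hdi] at this

/-- For nonzero linear forms `ℓ_1,…,ℓ_d` in `K[x_0,…,x_n]`, the subspace
`Σ_{j=1}^d π_j(ℓ)·R_1` of `R_d` has dimension at most `dn + 1`, where
`π_j(ℓ) = ∏_{m≠j} ℓ_m`. -/
theorem stmt2 (K : Type*) [Field K] [IsAlgClosed K] [CharZero K]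
    (n d : ℕ) (hn : 1 ≤ n) (hd : 1 ≤ d)
    (ℓ : Fin d → MvPolynomial (Fin (n + 1)) K)
    (hhom : ∀ j, (ℓ j).IsHomogeneous 1) (hne : ∀ j, ℓ j ≠ 0) :
    Module.finrank K ↥(⨆ j : Fin d,
        Submodule.map (LinearMap.mulLeft K (∏ m ∈ Finset.univ.erase j, ℓ m))
          (homogeneousSubmodule (Fin (n + 1)) K 1))
      ≤ d * n + 1 := by
  classical
  set π : Fin d → MvPolynomial (Fin (n + 1)) K := fun j => ∏ m ∈ Finset.univ.erase j, ℓ m with hπ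
  -- for each j, pick a variable with nonzero coefficient in ℓ j
  have hexists : ∀ j : Fin d, ∃ i : Fin (n + 1), coeff (Finsupp.single i 1) (ℓ j) ≠ 0 := by
    intro j
    obtain ⟨d₀, hd₀⟩ := MvPolynomial.support_nonempty.2 (hne j)
    have h1 := hhom j (Finsupp.mem_support_iff.1 hd₀)
    obtain ⟨i, hi⟩ := degree_one_single d₀ h1
    exact ⟨i, by rw [← hi]; exact Finsupp.mem_support_iff.1 hd₀⟩
  choose i0 hi0 using hexists
  -- each ℓ j spans, together with the other variables, all of R₁
  set S : Fin d → Set (MvPolynomial (Fin (n + 1)) K) := fun j => insert (ℓ j) ((fun i => X i) '' {i | i ≠ i0 j}) with hS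
  have hVle : ∀ j, homogeneousSubmodule (Fin (n + 1)) K 1 ≤ Submodule.span K (S j) := by
    intro j
    -- first: every X i is in the span
    have hX : ∀ i : Fin (n + 1), (X i : MvPolynomial (Fin (n + 1)) K) ∈ Submodule.span K (S j) := by
      intro i
      by_cases h : i = i0 j
      · subst h
        -- express X (i0 j) from ℓ j and the other variables
        set c : K := coeff (Finsupp.single (i0 j) 1) (ℓ j) with hc
        have hcne : c ≠ 0 := hi0 j
        have hmem : Finsupp.single (i0 j) 1 ∈ (ℓ j).support := Finsupp.mem_support_iff.2 hcne
        have hsum := support_sum_monomial_coeff (ℓ j)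
        rw [← Finset.add_sum_erase _ _ hmem] at hsum
        have hXi : (c • X (i0 j) : MvPolynomial (Fin (n + 1)) K) =
            ℓ j - ∑ v ∈ (ℓ j).support.erase (Finsupp.single (i0 j) 1), monomial v (coeff v (ℓ j)) := by
          have h2 : (monomial (Finsupp.single (i0 j) 1)) (coeff (Finsupp.single (i0 j) 1) (ℓ j))
              = c • X (i0 j) := by
            rw [smul_eq_C_mul, C_mul_X_eq_monomial, hc]
          rw [h2] at hsum
          exact (eq_sub_of_add_eq hsum)
        have hrhs : ℓ j - ∑ v ∈ (ℓ j).support.erase (Finsupp.single (i0 j) 1),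
            monomial v (coeff v (ℓ j)) ∈ Submodule.span K (S j) := by
          apply sub_mem
          · exact Submodule.subset_span (Set.mem_insert _ _)
          · apply Submodule.sum_mem
            intro v hv
            have hvs : v ∈ (ℓ j).support := Finset.mem_of_mem_erase hv
            obtain ⟨i', hi'⟩ := degree_one_single v (hhom j (Finsupp.mem_support_iff.1 hvs))
            have hi'ne : i' ≠ i0 j := by
              intro h'
              apply Finset.ne_of_mem_erase hv
              rw [hi', h']
            subst hi'
            rw [← C_mul_X_eq_monomial, ← smul_eq_C_mul]
            exact Submodule.smul_mem _ _ (Submodule.subset_span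
              (Set.mem_insert_of_mem _ ⟨i', hi'ne, rfl⟩))
        have := Submodule.smul_mem _ c⁻¹ (hXi ▸ hrhs)
        rwa [inv_smul_smul₀ hcne] at this
      · exact Submodule.subset_span (Set.mem_insert_of_mem _ ⟨i, h, rfl⟩)
    -- now any degree-1 homogeneous polynomial
    intro p hp
    rw [mem_homogeneousSubmodule] at hp
    rw [p.as_sum]
    apply Submodule.sum_mem
    intro v hv
    obtain ⟨i, hi⟩ := degree_one_single v (hp (Finsupp.mem_support_iff.1 hv))
    subst hi
    rw [← C_mul_X_eq_monomial, ← smul_eq_C_mul]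
    exact Submodule.smul_mem _ _ (hX i)
  -- the spanning finset
  set B : Finset (MvPolynomial (Fin (n + 1)) K) := insert (∏ m, ℓ m)
    (Finset.univ.biUnion fun j : Fin d =>
      (Finset.univ.erase (i0 j)).image fun i => π j * X i) with hB
  have hle : (⨆ j : Fin d,
      Submodule.map (LinearMap.mulLeft K (π j))
        (homogeneousSubmodule (Fin (n + 1)) K 1)) ≤ Submodule.span K (B : Set (MvPolynomial (Fin (n + 1)) K)) := by
    apply iSup_le
    intro j
    calc Submodule.map (LinearMap.mulLeft K (π j)) (homogeneousSubmodule (Fin (n + 1)) K 1)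
        ≤ Submodule.map (LinearMap.mulLeft K (π j)) (Submodule.span K (S j)) :=
          Submodule.map_mono (hVle j)
      _ = Submodule.span K ((LinearMap.mulLeft K (π j)) '' (S j)) := Submodule.map_span _ _
      _ ≤ Submodule.span K (B : Set (MvPolynomial (Fin (n + 1)) K)) := by
          apply Submodule.span_mono
          rintro _ ⟨q, hq, rfl⟩
          rcases hq with rfl | ⟨i, hi, rfl⟩
          · simp only [LinearMap.mulLeft_apply]
            have : π j * ℓ j = ∏ m, ℓ m := Finset.prod_erase_mul _ _ (Finset.mem_univ j)
            rw [this]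
            exact Finset.mem_coe.2 (Finset.mem_insert_self _ _)
          · simp only [LinearMap.mulLeft_apply]
            apply Finset.mem_coe.2
            apply Finset.mem_insert_of_mem
            apply Finset.mem_biUnion.2 ⟨j, Finset.mem_univ j, ?_⟩
            exact Finset.mem_image.2 ⟨i, Finset.mem_erase.2 ⟨hi, Finset.mem_univ i⟩, rfl⟩
  refine le_trans (Submodule.finrank_mono hle) (le_trans (finrank_span_finset_le_card B) ?_)
  have h1 : B.card ≤ (Finset.univ.biUnion fun j : Fin d =>
      (Finset.univ.erase (i0 j)).image fun i => π j * X i).card + 1 := Finset.card_insert_le _ _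
  have h2 : (Finset.univ.biUnion fun j : Fin d =>
      (Finset.univ.erase (i0 j)).image fun i => π j * X i).card
      ≤ ∑ j : Fin d, ((Finset.univ.erase (i0 j)).image fun i => π j * X i).card :=
    Finset.card_biUnion_le
  have h3 : ∀ j : Fin d, ((Finset.univ.erase (i0 j)).image fun i => π j * X i).card ≤ n := by
    intro j
    refine le_trans Finset.card_image_le ?_
    rw [Finset.card_erase_of_mem (Finset.mem_univ _)]
    simp
  have h4 : (∑ j : Fin d, ((Finset.univ.erase (i0 j)).image fun i => π j * X i).card)
      ≤ d * n := by
    refine le_trans (Finset.sum_le_sum fun j _ => h3 j) ?_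
    simp [Finset.sum_const, mul_comm]
  omega
end

section
/- Let K be an algebraically closed field of characteristic zero, n ≥ 1, d ≥ 2, s ≥ 1, and for each i ∈ {1,…,s} let f_i = (ℓ_{i,1},…,ℓ_{i,d}) be a d-tuple of nonzero linear forms in K[x_0,…,x_n] whose entries are pairwise non-proportional. If dim_K Σ_{i=1}^s Σ_{j=1}^d π_j(f_i)·R_1 = s(dn+1), then the sd degree-(d−1) forms π_j(f_i), for 1 ≤ i ≤ s and 1 ≤ j ≤ d, are linearly independent over K (so Σ_{i=1}^s Σ_{j=1}^d K·π_j(f_i) has dimension sd). -/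
set_option maxHeartbeats 1000000

open MvPolynomial

namespace Stmt4Aux

lemma degree_one_single {σ : Type*} {d : σ →₀ ℕ} (h : d.degree = 1) :
    ∃ m, d = Finsupp.single m 1 := by
  classical
  have hsum : ∑ i ∈ d.support, d i = 1 := h
  have hne : d.support.Nonempty := by
    by_contra hh
    rw [Finset.not_nonempty_iff_eq_empty] at hh
    rw [hh, Finset.sum_empty] at hsum; exact one_ne_zero hsum.symm
  have hcard : d.support.card ≤ 1 := by
    calc d.support.card = ∑ _i ∈ d.support, 1 := by simp
    _ ≤ ∑ i ∈ d.support, d i := Finset.sum_le_sum (fun i hi => Nat.one_le_iff_ne_zero.mpr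
        (Finsupp.mem_support_iff.mp hi))
    _ = 1 := hsum
  obtain ⟨m, hm⟩ := hne
  have hsupp : d.support = {m} := by
    apply Finset.eq_singleton_iff_unique_mem.mpr
    refine ⟨hm, fun x hx => ?_⟩
    by_contra hxm
    have : 2 ≤ d.support.card := Finset.one_lt_card.mpr ⟨x, hx, m, hm, hxm⟩
    omega
  refine ⟨m, ?_⟩
  have hdm : d m = 1 := by rw [hsupp, Finset.sum_singleton] at hsum; exact hsum
  have := Finsupp.support_eq_singleton.mp hsupp
  rw [this.2, hdm]

variable (K : Type*) [Field K] (n : ℕ)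

noncomputable def lam : ((Fin (n+1)) → K) →ₗ[K] MvPolynomial (Fin (n+1)) K where
  toFun c := ∑ m, MvPolynomial.C (c m) * X m
  map_add' c c' := by simp [add_mul, Finset.sum_add_distrib]
  map_smul' a c := by
    simp only [Pi.smul_apply, smul_eq_mul, RingHom.id_apply, Finset.smul_sum, map_mul,
      MvPolynomial.smul_eq_C_mul, mul_assoc]

variable {K n}

lemma coeff_lam (c : (Fin (n+1)) → K) (m : Fin (n+1)) :
    coeff (Finsupp.single m 1) (lam K n c) = c m := by
  classical
  have : lam K n c = ∑ m', MvPolynomial.C (c m') * X m' := rfl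
  rw [this, MvPolynomial.coeff_sum]
  rw [Finset.sum_eq_single m]
  · simp [coeff_C_mul, MvPolynomial.coeff_X]
  · intro b _ hb
    rw [coeff_C_mul, MvPolynomial.coeff_X', if_neg, mul_zero]
    exact fun hcon => hb ((Finsupp.single_left_inj one_ne_zero).mp hcon)
  · simp

lemma lam_isHomogeneous (c : (Fin (n+1)) → K) : (lam K n c).IsHomogeneous 1 := by
  have : lam K n c = ∑ m', MvPolynomial.C (c m') * X m' := rfl
  rw [this]
  apply MvPolynomial.IsHomogeneous.sum
  intro m _
  have : MvPolynomial.C (c m) * X m = monomial (Finsupp.single m 1) (c m) := by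
    rw [MvPolynomial.C_mul_X_eq_monomial]
  rw [this]
  exact isHomogeneous_monomial _ (by classical simp [Finsupp.degree_single])

lemma lam_repr {p : MvPolynomial (Fin (n+1)) K} (hp : p.IsHomogeneous 1) :
    lam K n (fun m => coeff (Finsupp.single m 1) p) = p := by
  classical
  have hl : lam K n (fun m => coeff (Finsupp.single m 1) p)
      = ∑ m', MvPolynomial.C (coeff (Finsupp.single m' 1) p) * X m' := rfl
  ext e
  rw [hl, MvPolynomial.coeff_sum]
  by_cases he : ∃ m, e = Finsupp.single m 1
  · obtain ⟨m, rfl⟩ := he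
    rw [Finset.sum_eq_single m]
    · simp [coeff_C_mul, MvPolynomial.coeff_X]
    · intro b _ hb
      rw [coeff_C_mul, MvPolynomial.coeff_X', if_neg, mul_zero]
      exact fun hcon => hb ((Finsupp.single_left_inj one_ne_zero).mp hcon)
    · simp
  · have h0 : coeff e p = 0 := by
      by_contra hc
      have := hp hc
      exact he (by obtain ⟨m, hm⟩ := degree_one_single (by
        rw [Finsupp.degree_eq_weight_one]; exact this); exact ⟨m, hm⟩)
    rw [h0]
    apply Finset.sum_eq_zero
    intro m' _
    rw [coeff_C_mul, MvPolynomial.coeff_X', if_neg, mul_zero]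
    exact fun hcon => he ⟨m', hcon.symm⟩

lemma lam_range : LinearMap.range (lam K n) = homogeneousSubmodule (Fin (n+1)) K 1 := by
  apply le_antisymm
  · rintro p ⟨c, rfl⟩
    exact lam_isHomogeneous c
  · intro p hp
    exact ⟨fun m => coeff (Finsupp.single m 1) p, lam_repr hp⟩

lemma lam_inj : Function.Injective (lam K n) := by
  intro c c' h
  funext m
  rw [← coeff_lam c m, ← coeff_lam c' m, h]

end Stmt4Aux


/-- Lemma 4.1 of the paper: If `f_1,…,f_s` are `d`-tuples of nonzero, pairwise
non-proportional linear forms in `K[x_0,…,x_n]` and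
`dim Σ_{i=1}^s Σ_{j=1}^d π_j(f_i)·R_1 = s(dn+1)`, then the `sd` forms `π_j(f_i)` are linearly
independent over `K`. -/
theorem stmt4 (K : Type*) [Field K] [IsAlgClosed K] [CharZero K]
    (n d s : ℕ) (hn : 1 ≤ n) (hd : 2 ≤ d) (hs : 1 ≤ s)
    (f : Fin s → Fin d → MvPolynomial (Fin (n + 1)) K)
    (hhom : ∀ i j, (f i j).IsHomogeneous 1) (hne : ∀ i j, f i j ≠ 0)
    (hprop : ∀ i, ∀ j j' : Fin d, j ≠ j' → ∀ c : K, f i j ≠ c • f i j')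
    (hdim : Module.finrank K ↥(⨆ i : Fin s, ⨆ j : Fin d,
        Submodule.map (LinearMap.mulLeft K (∏ m ∈ Finset.univ.erase j, f i m))
          (homogeneousSubmodule (Fin (n + 1)) K 1))
      = s * (d * n + 1)) :
    LinearIndependent K
      (fun p : Fin s × Fin d => ∏ m ∈ Finset.univ.erase p.2, f p.1 m) := by

  classical
  set π : Fin s × Fin d → MvPolynomial (Fin (n + 1)) K :=
    fun p => ∏ m ∈ Finset.univ.erase p.2, f p.1 m with hπdef
  have hπne : ∀ p, π p ≠ 0 := fun p =>
    Finset.prod_ne_zero_iff.mpr (fun m _ => hne p.1 m)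
  -- the main linear map Φ
  set Φ : ((Fin s × Fin d) → (Fin (n + 1) → K)) →ₗ[K] MvPolynomial (Fin (n + 1)) K :=
    LinearMap.lsum K (fun _ : Fin s × Fin d => Fin (n+1) → K) K
      (fun p => (LinearMap.mulLeft K (π p)).comp (Stmt4Aux.lam K n)) with hΦdef
  have hΦapply : ∀ g, Φ g = ∑ p : Fin s × Fin d, π p * Stmt4Aux.lam K n (g p) := by
    intro g
    rw [hΦdef, LinearMap.lsum_apply]
    simp [LinearMap.sum_apply, LinearMap.comp_apply, LinearMap.mulLeft_apply,
      LinearMap.proj_apply]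
  have hΦsingle : ∀ (p) (c : Fin (n+1) → K),
      Φ (Pi.single p c) = π p * Stmt4Aux.lam K n c := by
    intro p c
    rw [hΦapply, Finset.sum_eq_single p]
    · rw [Pi.single_eq_same]
    · intro q _ hq
      rw [Pi.single_eq_of_ne hq, map_zero, mul_zero]
    · intro h; exact absurd (Finset.mem_univ p) h
  -- the range of Φ
  have hrange : LinearMap.range Φ
      = ⨆ p : Fin s × Fin d, Submodule.map (LinearMap.mulLeft K (π p))
          (homogeneousSubmodule (Fin (n + 1)) K 1) := by
    apply le_antisymm
    · rintro y ⟨g, rfl⟩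
      rw [hΦapply]
      apply Submodule.sum_mem
      intro p _
      apply Submodule.mem_iSup_of_mem p
      exact ⟨Stmt4Aux.lam K n (g p), Stmt4Aux.lam_isHomogeneous _, rfl⟩
    · apply iSup_le
      intro p
      rintro y ⟨ℓ, hℓ, rfl⟩
      have : ℓ ∈ LinearMap.range (Stmt4Aux.lam (n := n) K) := by
        rw [Stmt4Aux.lam_range]; exact hℓ
      obtain ⟨c, rfl⟩ := this
      exact ⟨Pi.single p c, hΦsingle p c⟩
  -- rank computations
  have hdim2 : Module.finrank K ↥(⨆ p : Fin s × Fin d,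
      Submodule.map (LinearMap.mulLeft K (π p))
        (homogeneousSubmodule (Fin (n + 1)) K 1)) = s * (d * n + 1) := by
    rw [iSup_prod]; exact hdim
  have hrankrange : Module.finrank K (LinearMap.range Φ) = s * (d * n + 1) := by
    rw [hrange]; exact hdim2
  have hdom : Module.finrank K ((Fin s × Fin d) → (Fin (n+1) → K)) = s * d * (n+1) := by
    rw [Module.finrank_pi_fintype, Finset.sum_const, Finset.card_univ, Fintype.card_prod,
      Fintype.card_fin, Fintype.card_fin, Module.finrank_pi, Fintype.card_fin, smul_eq_mul]
  have hrn := LinearMap.finrank_range_add_finrank_ker Φ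
  rw [hrankrange, hdom] at hrn
  have hker : Module.finrank K (LinearMap.ker Φ) = s * (d-1) := by
    have hid : s * (d*n+1) + s*(d-1) = s*d*(n+1) := by
      obtain ⟨e, rfl⟩ : ∃ e, d = e + 1 := ⟨d - 1, by omega⟩
      simp only [Nat.add_sub_cancel]
      ring
    exact Nat.add_left_cancel (hrn.trans hid.symm)
  -- the summation map and its kernel S
  set sm : ((Fin s × Fin d) → K) →ₗ[K] (Fin s → K) :=
    LinearMap.pi (fun i => ∑ j : Fin d, LinearMap.proj (i, j)) with hsmdef
  have hsm : ∀ (c) (i : Fin s), sm c i = ∑ j, c (i, j) := by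
    intro c i
    rw [hsmdef]
    simp [LinearMap.pi_apply, LinearMap.sum_apply, LinearMap.proj_apply]
  have hsmsurj : Function.Surjective sm := by
    intro v
    refine ⟨fun p => if p.2 = (⟨0, by omega⟩ : Fin d) then v p.1 else 0, ?_⟩
    funext i
    rw [hsm]
    simp
  have hS : Module.finrank K (LinearMap.ker sm) = s * (d-1) := by
    have h1 := LinearMap.finrank_range_add_finrank_ker sm
    rw [LinearMap.range_eq_top.mpr hsmsurj, finrank_top, Module.finrank_pi,
      Module.finrank_pi, Fintype.card_prod, Fintype.card_fin, Fintype.card_fin] at h1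
    have hid : s + s*(d-1) = s*d := by
      obtain ⟨e, rfl⟩ : ∃ e, d = e + 1 := ⟨d - 1, by omega⟩
      simp only [Nat.add_sub_cancel]
      ring
    exact Nat.add_left_cancel (h1.trans hid.symm)
  -- the map Ψ
  set a : Fin s × Fin d → (Fin (n+1) → K) :=
    fun p m => MvPolynomial.coeff (Finsupp.single m 1) (f p.1 p.2) with hadef
  have hla : ∀ p : Fin s × Fin d, Stmt4Aux.lam K n (a p) = f p.1 p.2 :=
    fun p => Stmt4Aux.lam_repr (hhom p.1 p.2)
  set Ψ : ((Fin s × Fin d) → K) →ₗ[K] ((Fin s × Fin d) → (Fin (n+1) → K)) :=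
    LinearMap.pi (fun p => (LinearMap.toSpanSingleton K _ (a p)).comp (LinearMap.proj p))
    with hΨdef
  have hΨ : ∀ (c) (p : Fin s × Fin d), Ψ c p = c p • a p := by
    intro c p
    rw [hΨdef]
    simp [LinearMap.pi_apply, LinearMap.toSpanSingleton_apply, LinearMap.proj_apply]
  have hΨinj : Function.Injective Ψ := by
    rw [← LinearMap.ker_eq_bot]
    rw [LinearMap.ker_eq_bot']
    intro c hc
    funext p
    have h1 : c p • a p = 0 := by rw [← hΨ c p, hc]; rfl
    rcases smul_eq_zero.mp h1 with h | h
    · exact h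
    · exfalso
      apply hne p.1 p.2
      rw [← hla p, h, map_zero]
  -- W and the kernel identification
  have hWle : (LinearMap.ker sm).map Ψ ≤ LinearMap.ker Φ := by
    rintro y ⟨c, hc, rfl⟩
    rw [LinearMap.mem_ker, hΦapply]
    have step : ∀ p : Fin s × Fin d, π p * Stmt4Aux.lam K n (Ψ c p)
        = c p • ∏ m, f p.1 m := by
      intro p
      rw [hΨ, map_smul, hla, mul_smul_comm]
      congr 1
      rw [hπdef]
      exact (mul_comm _ _).trans (Finset.mul_prod_erase Finset.univ (f p.1)
        (Finset.mem_univ p.2))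
    rw [Finset.sum_congr rfl (fun p _ => step p)]
    rw [Fintype.sum_prod_type]
    apply Finset.sum_eq_zero
    intro i _
    have hred : ∀ y : Fin d, c (i, y) • ∏ m, f (i, y).1 m = c (i, y) • ∏ m, f i m :=
      fun y => rfl
    rw [Finset.sum_congr rfl (fun y _ => hred y), ← Finset.sum_smul]
    have : ∑ j, c (i, j) = 0 := by
      rw [← hsm]
      rw [LinearMap.mem_ker.mp hc]
      rfl
    rw [this, zero_smul]
  have hWrank : Module.finrank K ((LinearMap.ker sm).map Ψ) = s * (d-1) := by
    rw [← hS]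
    exact (LinearEquiv.finrank_eq (Submodule.equivMapOfInjective Ψ hΨinj
      (LinearMap.ker sm))).symm
  have hWeq : (LinearMap.ker sm).map Ψ = LinearMap.ker Φ :=
    Submodule.eq_of_le_of_finrank_eq hWle (hWrank.trans hker.symm)
  -- lam of a basis vector
  have hlamX : ∀ m : Fin (n+1), Stmt4Aux.lam K n ((Pi.single m 1 : Fin (n+1) → K)) = X m := by
    intro m
    have h0 : Stmt4Aux.lam K n ((Pi.single m 1 : Fin (n+1) → K))
        = ∑ m', MvPolynomial.C ((Pi.single m 1 : Fin (n+1) → K) m') * X m' := rfl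
    rw [h0, Finset.sum_eq_single m]
    · simp
    · intro b _ hb
      rw [Pi.single_eq_of_ne hb, map_zero, zero_mul]
    · intro h; exact absurd (Finset.mem_univ m) h
  -- conclusion
  rw [Fintype.linearIndependent_iff]
  intro c hc
  have key : ∀ m : Fin (n+1), ∃ c' : (Fin s × Fin d) → K,
      ∀ p : Fin s × Fin d, c' p • f p.1 p.2 = c p • X m := by
    intro m
    have hmem : (fun p : Fin s × Fin d => c p • (Pi.single m 1 : Fin (n+1) → K)) ∈ LinearMap.ker Φ := by
      rw [LinearMap.mem_ker, hΦapply]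
      have : ∀ p : Fin s × Fin d, π p * Stmt4Aux.lam K n (c p • (Pi.single m 1 : Fin (n+1) → K))
          = (c p • π p) * X m := by
        intro p
        rw [map_smul, hlamX, mul_smul_comm, smul_mul_assoc]
      rw [Finset.sum_congr rfl (fun p _ => this p), ← Finset.sum_mul, hc, zero_mul]
    rw [← hWeq] at hmem
    obtain ⟨c', _, hc'⟩ := hmem
    refine ⟨c', fun p => ?_⟩
    have h1 : c' p • a p = c p • (Pi.single m 1 : Fin (n+1) → K) := by
      rw [← hΨ c' p, hc']
    have h2 := congrArg (Stmt4Aux.lam K n) h1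
    rw [map_smul, map_smul, hla, hlamX] at h2
    exact h2
  intro p
  have hm01 : (⟨0, by omega⟩ : Fin (n+1)) ≠ (⟨1, by omega⟩ : Fin (n+1)) := by
    simp [Fin.ext_iff]
  obtain ⟨u, hu⟩ := key ⟨0, by omega⟩
  obtain ⟨v, hv⟩ := key ⟨1, by omega⟩
  have h1 : (v p * c p) • (X (⟨0, by omega⟩ : Fin (n+1)) : MvPolynomial (Fin (n+1)) K)
      = (u p * c p) • X (⟨1, by omega⟩ : Fin (n+1)) := by
    rw [mul_smul, mul_smul, ← hu p, ← hv p, smul_smul, smul_smul, mul_comm]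
  have h2 : v p * c p = 0 := by
    have h3 := congrArg (MvPolynomial.coeff
      (Finsupp.single (⟨0, by omega⟩ : Fin (n+1)) 1)) h1
    rw [MvPolynomial.coeff_smul, MvPolynomial.coeff_smul, MvPolynomial.coeff_X_same,
      MvPolynomial.coeff_X', if_neg, smul_eq_mul, smul_eq_mul, mul_one, mul_zero] at h3
    · exact h3
    · exact fun hcon => hm01.symm ((Finsupp.single_left_inj one_ne_zero).mp hcon)
  rcases mul_eq_zero.mp h2 with hv0 | hc0
  · have h4 : c p • (X (⟨1, by omega⟩ : Fin (n+1)) : MvPolynomial (Fin (n+1)) K) = 0 := by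
      rw [← hv p, hv0, zero_smul]
    have h5 := congrArg (MvPolynomial.coeff
      (Finsupp.single (⟨1, by omega⟩ : Fin (n+1)) 1)) h4
    rw [MvPolynomial.coeff_smul, MvPolynomial.coeff_X_same, smul_eq_mul, mul_one,
      MvPolynomial.coeff_zero] at h5
    exact h5
  · exact hc0
end

section
/- Let K be an algebraically closed field of characteristic zero, n ≥ 1, d ≥ 3, and let f = (ℓ_1,…,ℓ_d) be a d-tuple of linear forms in K[x_0,…,x_n] with ℓ_1 = x_0 and ℓ_2,…,ℓ_d ∈ U = span{x_1,…,x_n}. Then the subspace Σ_{j=1}^d π_j(f)·R_1 of R_d decomposes as the direct sum π_1(f)·U ⊕ x_0·(Σ_{j=2}^d π_{{1,j}}(f)·U) ⊕ x_0^2·(Σ_{j=2}^d K·π_{{1,j}}(f)), where π_{{1,j}}(f) = ∏_{m∉{1,j}} ℓ_m, the directness of the sum being given by the grading by degree in x_0. -/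
set_option maxHeartbeats 1000000

open MvPolynomial

section Aux

lemma homog_one_le (σ : Type*) (K : Type*) [CommSemiring K] :
    homogeneousSubmodule σ K 1 ≤ Submodule.span K (Set.range (X : σ → MvPolynomial σ K)) := by
  classical
  intro p hp
  rw [mem_homogeneousSubmodule] at hp
  rw [p.as_sum]
  refine Submodule.sum_mem _ fun v hv => ?_
  have hdeg : v.degree = 1 := by
    by_contra h
    exact (mem_support_iff.mp hv) (hp.coeff_eq_zero h)
  have hne : v.support.Nonempty := by
    rw [Finset.nonempty_iff_ne_empty]
    intro h
    rw [Finsupp.degree_apply, h, Finset.sum_empty] at hdeg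
    omega
  obtain ⟨i, hi⟩ := hne
  have hvi : v i = 1 := by
    have h1 : v i ≤ 1 := hdeg ▸ Finsupp.le_degree i v
    have h2 : v i ≠ 0 := Finsupp.mem_support_iff.mp hi
    omega
  have hsing : v = Finsupp.single i 1 := by
    rw [Finsupp.eq_single_iff]
    refine ⟨fun j hj => ?_, hvi⟩
    simp only [Finset.mem_singleton]
    by_contra hji
    have := Finset.add_sum_erase _ v hi
    have h3 : v j ≤ ∑ k ∈ v.support.erase i, v k :=
      Finset.single_le_sum (fun k _ => Nat.zero_le _)
        (Finset.mem_erase.mpr ⟨hji, hj⟩)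
    have h4 : v j ≠ 0 := Finsupp.mem_support_iff.mp hj
    rw [Finsupp.degree_apply] at hdeg
    omega
  have key : ∀ c : K, (monomial (Finsupp.single i 1) c : MvPolynomial σ K)
      ∈ Submodule.span K (Set.range (X : σ → MvPolynomial σ K)) := by
    intro c
    have : monomial (Finsupp.single i 1) c = c • X i := by
      rw [smul_eq_C_mul, X, C_mul_monomial, mul_one]
    rw [this]
    exact Submodule.smul_mem _ _ (Submodule.subset_span ⟨i, rfl⟩)
  rw [hsing]
  exact key _

lemma finSuccEquiv_rename_succ' (K : Type*) [CommSemiring K] (n : ℕ)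
    (g : MvPolynomial (Fin n) K) :
    finSuccEquiv K n (rename Fin.succ g) = Polynomial.C g := by
  have h : (finSuccEquiv K n).toAlgHom.comp (rename (Fin.succ : Fin n → Fin (n+1)))
      = IsScalarTower.toAlgHom K (MvPolynomial (Fin n) K)
          (Polynomial (MvPolynomial (Fin n) K)) := by
    apply algHom_ext
    intro i
    simp [finSuccEquiv_X_succ, Polynomial.algebraMap_eq]
  have := congrArg (fun φ => φ g) h
  simpa [Polynomial.algebraMap_eq] using this

lemma key_disj (K : Type*) [Field K] (n : ℕ) (i j k : ℕ) (hij : i ≠ j) (hik : i ≠ k) :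
    Disjoint
      (Submodule.map (LinearMap.mulLeft K ((X 0 : MvPolynomial (Fin (n+1)) K) ^ i))
        (Subalgebra.toSubmodule (rename (Fin.succ : Fin n → Fin (n+1)) :
          MvPolynomial (Fin n) K →ₐ[K] MvPolynomial (Fin (n+1)) K).range))
      ((Submodule.map (LinearMap.mulLeft K ((X 0 : MvPolynomial (Fin (n+1)) K) ^ j))
        (Subalgebra.toSubmodule (rename (Fin.succ : Fin n → Fin (n+1)) :
          MvPolynomial (Fin n) K →ₐ[K] MvPolynomial (Fin (n+1)) K).range)) ⊔
       (Submodule.map (LinearMap.mulLeft K ((X 0 : MvPolynomial (Fin (n+1)) K) ^ k))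
        (Subalgebra.toSubmodule (rename (Fin.succ : Fin n → Fin (n+1)) :
          MvPolynomial (Fin n) K →ₐ[K] MvPolynomial (Fin (n+1)) K).range))) := by
  rw [Submodule.disjoint_def]
  intro p hp hp'
  obtain ⟨a, ha, rfl⟩ := hp
  obtain ⟨g, rfl⟩ := ha
  obtain ⟨b, hb, c, hc, hbc⟩ := Submodule.mem_sup.mp hp'
  obtain ⟨b', hb', rfl⟩ := hb
  obtain ⟨g1, rfl⟩ := hb'
  obtain ⟨c', hc', rfl⟩ := hc
  obtain ⟨g2, rfl⟩ := hc'
  simp only [LinearMap.mulLeft_apply] at hbc ⊢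
  have := congrArg (finSuccEquiv K n) hbc
  simp only [AlgHom.toRingHom_eq_coe, RingHom.coe_coe, map_add, map_mul, map_pow,
    finSuccEquiv_X_zero, finSuccEquiv_rename_succ'] at this
  have hg : g = 0 := by
    rw [Polynomial.X_pow_mul, Polynomial.X_pow_mul, Polynomial.X_pow_mul,
      Polynomial.C_mul_X_pow_eq_monomial, Polynomial.C_mul_X_pow_eq_monomial,
      Polynomial.C_mul_X_pow_eq_monomial] at this
    have hco := congrArg (fun q => Polynomial.coeff q i) this
    simp only [Polynomial.coeff_add, Polynomial.coeff_monomial] at hco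
    simpa [hij.symm, hik.symm] using hco.symm
  rw [hg, map_zero, mul_zero]

lemma map_span_singleton {K : Type*} [CommRing K] {A : Type*} [CommRing A] [Algebra K A]
    (g h : A) :
    Submodule.map (LinearMap.mulLeft K g) (Submodule.span K {h})
      = Submodule.span K {g * h} := by
  rw [Submodule.map_span, Set.image_singleton, LinearMap.mulLeft_apply]

end Aux


/-- For a `d`-tuple `f = (ℓ_1,…,ℓ_d)` of linear forms with `ℓ_1 = x_0` and
`ℓ_2,…,ℓ_d ∈ U = span{x_1,…,x_n}`, the subspace `Σ_{j=1}^d π_j(f)·R_1` of `R_d` decomposes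
as the direct sum
`π_1(f)·U ⊕ x_0·(Σ_{j=2}^d π_{{1,j}}(f)·U) ⊕ x_0²·(Σ_{j=2}^d K·π_{{1,j}}(f))`,
the directness being given by the grading by degree in `x_0`. -/
theorem stmt7 (K : Type*) [Field K] [IsAlgClosed K] [CharZero K]
    (n d : ℕ) (hn : 1 ≤ n) (hd : 3 ≤ d)
    (f : Fin d → MvPolynomial (Fin (n + 1)) K)
    (hf0 : f ⟨0, by omega⟩ = X 0)
    (hfU : ∀ j : Fin d, j ≠ ⟨0, by omega⟩ →
      f j ∈ Submodule.span K
        (Set.range fun i : Fin n => (X i.succ : MvPolynomial (Fin (n + 1)) K))) :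
    (⨆ j : Fin d,
        Submodule.map (LinearMap.mulLeft K (∏ m ∈ Finset.univ.erase j, f m))
          (homogeneousSubmodule (Fin (n + 1)) K 1))
      = (Submodule.map
            (LinearMap.mulLeft K (∏ m ∈ Finset.univ.erase (⟨0, by omega⟩ : Fin d), f m))
            (Submodule.span K
              (Set.range fun i : Fin n => (X i.succ : MvPolynomial (Fin (n + 1)) K)))) ⊔
        (Submodule.map (LinearMap.mulLeft K (X 0))
          (⨆ (j : Fin d) (_ : j ≠ ⟨0, by omega⟩),
            Submodule.map
              (LinearMap.mulLeft K (∏ m ∈ Finset.univ \ {⟨0, by omega⟩, j}, f m))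
              (Submodule.span K
                (Set.range fun i : Fin n => (X i.succ : MvPolynomial (Fin (n + 1)) K))))) ⊔
        (Submodule.map (LinearMap.mulLeft K ((X 0) ^ 2))
          (⨆ (j : Fin d) (_ : j ≠ ⟨0, by omega⟩),
            Submodule.span K {∏ m ∈ Finset.univ \ {⟨0, by omega⟩, j}, f m})) ∧
    Disjoint
      (Submodule.map
          (LinearMap.mulLeft K (∏ m ∈ Finset.univ.erase (⟨0, by omega⟩ : Fin d), f m))
          (Submodule.span K
            (Set.range fun i : Fin n => (X i.succ : MvPolynomial (Fin (n + 1)) K))))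
      ((Submodule.map (LinearMap.mulLeft K (X 0))
          (⨆ (j : Fin d) (_ : j ≠ ⟨0, by omega⟩),
            Submodule.map
              (LinearMap.mulLeft K (∏ m ∈ Finset.univ \ {⟨0, by omega⟩, j}, f m))
              (Submodule.span K
                (Set.range fun i : Fin n => (X i.succ : MvPolynomial (Fin (n + 1)) K))))) ⊔
        (Submodule.map (LinearMap.mulLeft K ((X 0) ^ 2))
          (⨆ (j : Fin d) (_ : j ≠ ⟨0, by omega⟩),
            Submodule.span K {∏ m ∈ Finset.univ \ {⟨0, by omega⟩, j}, f m}))) ∧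
    Disjoint
      (Submodule.map (LinearMap.mulLeft K (X 0))
        (⨆ (j : Fin d) (_ : j ≠ ⟨0, by omega⟩),
          Submodule.map
            (LinearMap.mulLeft K (∏ m ∈ Finset.univ \ {⟨0, by omega⟩, j}, f m))
            (Submodule.span K
              (Set.range fun i : Fin n => (X i.succ : MvPolynomial (Fin (n + 1)) K)))))
      ((Submodule.map
          (LinearMap.mulLeft K (∏ m ∈ Finset.univ.erase (⟨0, by omega⟩ : Fin d), f m))
          (Submodule.span K
            (Set.range fun i : Fin n => (X i.succ : MvPolynomial (Fin (n + 1)) K)))) ⊔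
        (Submodule.map (LinearMap.mulLeft K ((X 0) ^ 2))
          (⨆ (j : Fin d) (_ : j ≠ ⟨0, by omega⟩),
            Submodule.span K {∏ m ∈ Finset.univ \ {⟨0, by omega⟩, j}, f m}))) ∧
    Disjoint
      (Submodule.map (LinearMap.mulLeft K ((X 0) ^ 2))
        (⨆ (j : Fin d) (_ : j ≠ ⟨0, by omega⟩),
          Submodule.span K {∏ m ∈ Finset.univ \ {⟨0, by omega⟩, j}, f m}))
      ((Submodule.map
          (LinearMap.mulLeft K (∏ m ∈ Finset.univ.erase (⟨0, by omega⟩ : Fin d), f m))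
          (Submodule.span K
            (Set.range fun i : Fin n => (X i.succ : MvPolynomial (Fin (n + 1)) K)))) ⊔
        (Submodule.map (LinearMap.mulLeft K (X 0))
          (⨆ (j : Fin d) (_ : j ≠ ⟨0, by omega⟩),
            Submodule.map
              (LinearMap.mulLeft K (∏ m ∈ Finset.univ \ {⟨0, by omega⟩, j}, f m))
              (Submodule.span K
                (Set.range fun i : Fin n => (X i.succ : MvPolynomial (Fin (n + 1)) K)))))) := by
    classical
  set z : Fin d := ⟨0, by omega⟩ with hzdef
  set U : Submodule K (MvPolynomial (Fin (n+1)) K) :=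
    Submodule.span K
      (Set.range fun i : Fin n => (X i.succ : MvPolynomial (Fin (n + 1)) K)) with hUdef
  set Rng : Submodule K (MvPolynomial (Fin (n+1)) K) :=
    Subalgebra.toSubmodule (rename (Fin.succ : Fin n → Fin (n+1)) :
      MvPolynomial (Fin n) K →ₐ[K] MvPolynomial (Fin (n+1)) K).range with hRngdef
  -- basic memberships
  have hUR : U ≤ Rng := by
    rw [hUdef, Submodule.span_le]
    rintro _ ⟨i, rfl⟩
    exact ⟨X i, rename_X _ _⟩
  have hURng : ∀ m : Fin d, m ≠ z → f m ∈
      (rename (Fin.succ : Fin n → Fin (n+1)) :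
        MvPolynomial (Fin n) K →ₐ[K] MvPolynomial (Fin (n+1)) K).range :=
    fun m hm => hUR (hfU m hm)
  have hqR : ∀ j : Fin d, (∏ m ∈ Finset.univ \ {z, j}, f m) ∈
      (rename (Fin.succ : Fin n → Fin (n+1)) :
        MvPolynomial (Fin n) K →ₐ[K] MvPolynomial (Fin (n+1)) K).range := by
    intro j
    refine prod_mem fun m hm => hURng m ?_
    simp only [Finset.mem_sdiff, Finset.mem_insert, Finset.mem_singleton] at hm
    tauto
  have hπzR : (∏ m ∈ Finset.univ.erase z, f m) ∈
      (rename (Fin.succ : Fin n → Fin (n+1)) :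
        MvPolynomial (Fin n) K →ₐ[K] MvPolynomial (Fin (n+1)) K).range := by
    refine prod_mem fun m hm => hURng m ?_
    exact (Finset.mem_erase.mp hm).1
  -- finset splitting
  have hsetd : ∀ j : Fin d, (Finset.univ \ {z, j} : Finset (Fin d))
      = (Finset.univ.erase j).erase z := by
    intro j
    ext m
    simp only [Finset.mem_sdiff, Finset.mem_insert, Finset.mem_singleton, Finset.mem_erase,
      Finset.mem_univ, and_true, true_and]
    tauto
  have hsetd' : ∀ j : Fin d, (Finset.univ \ {z, j} : Finset (Fin d))
      = (Finset.univ.erase z).erase j := by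
    intro j
    ext m
    simp only [Finset.mem_sdiff, Finset.mem_insert, Finset.mem_singleton, Finset.mem_erase,
      Finset.mem_univ, and_true, true_and]
    tauto
  have hsplit : ∀ j : Fin d, j ≠ z →
      (∏ m ∈ Finset.univ.erase j, f m)
        = X 0 * ∏ m ∈ Finset.univ \ {z, j}, f m := by
    intro j hj
    have hzm : z ∈ Finset.univ.erase j := Finset.mem_erase.mpr ⟨Ne.symm hj, Finset.mem_univ _⟩
    rw [← Finset.mul_prod_erase _ f hzm, hf0, hsetd]
  have hπz : ∀ j : Fin d, j ≠ z →
      (∏ m ∈ Finset.univ.erase z, f m)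
        = f j * ∏ m ∈ Finset.univ \ {z, j}, f m := by
    intro j hj
    have hjm : j ∈ Finset.univ.erase z := Finset.mem_erase.mpr ⟨hj, Finset.mem_univ _⟩
    rw [← Finset.mul_prod_erase _ f hjm, hsetd']
  have hUle : U ≤ homogeneousSubmodule (Fin (n+1)) K 1 := by
    rw [hUdef, Submodule.span_le]
    rintro _ ⟨i, rfl⟩
    rw [SetLike.mem_coe, mem_homogeneousSubmodule]
    exact isHomogeneous_X _ _
  have hX0R1 : (X 0 : MvPolynomial (Fin (n+1)) K) ∈ homogeneousSubmodule (Fin (n+1)) K 1 :=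
    isHomogeneous_X _ _
  -- bounds for the three pieces
  have hA_le : Submodule.map (LinearMap.mulLeft K (∏ m ∈ Finset.univ.erase z, f m)) U
      ≤ Rng := by
    rintro p ⟨u, hu, rfl⟩
    have hu' := hUR hu
    rw [hRngdef, Subalgebra.mem_toSubmodule] at hu' ⊢
    exact mul_mem hπzR hu'
  have hB_le : (⨆ (j : Fin d) (_ : j ≠ z),
        Submodule.map (LinearMap.mulLeft K (∏ m ∈ Finset.univ \ {z, j}, f m)) U)
      ≤ Rng := by
    refine iSup_le fun j => iSup_le fun hj => ?_
    rintro p ⟨u, hu, rfl⟩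
    have hu' := hUR hu
    rw [hRngdef, Subalgebra.mem_toSubmodule] at hu' ⊢
    exact mul_mem (hqR j) hu'
  have hC_le : (⨆ (j : Fin d) (_ : j ≠ z),
        Submodule.span K {∏ m ∈ Finset.univ \ {z, j}, f m})
      ≤ Rng := by
    refine iSup_le fun j => iSup_le fun hj => ?_
    rw [Submodule.span_le, Set.singleton_subset_iff]
    exact hqR j
  have hpow0 : Submodule.map (LinearMap.mulLeft K ((X 0 : MvPolynomial (Fin (n+1)) K) ^ 0))
      Rng = Rng := by
    rw [pow_zero, LinearMap.mulLeft_one, Submodule.map_id]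
  have hpow1 : (LinearMap.mulLeft K ((X 0 : MvPolynomial (Fin (n+1)) K) ^ 1))
      = LinearMap.mulLeft K (X 0 : MvPolynomial (Fin (n+1)) K) := by
    rw [pow_one]
  refine ⟨?_, ?_, ?_, ?_⟩
  · -- the equality
    apply le_antisymm
    · refine iSup_le fun j => ?_
      have hR1le : Submodule.map (LinearMap.mulLeft K (∏ m ∈ Finset.univ.erase j, f m))
          (homogeneousSubmodule (Fin (n+1)) K 1)
          ≤ Submodule.span K {(∏ m ∈ Finset.univ.erase j, f m) * X 0} ⊔
            Submodule.map (LinearMap.mulLeft K (∏ m ∈ Finset.univ.erase j, f m)) U := by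
        rw [← map_span_singleton, ← Submodule.map_sup]
        refine Submodule.map_mono ?_
        refine (homog_one_le _ _).trans (Submodule.span_le.mpr ?_)
        rintro _ ⟨i, rfl⟩
        refine Fin.cases ?_ ?_ i
        · exact Submodule.mem_sup_left (Submodule.subset_span rfl)
        · intro i'
          exact Submodule.mem_sup_right (Submodule.subset_span ⟨i', rfl⟩)
      refine hR1le.trans ?_
      by_cases hj : j = z
      · subst hj
        refine sup_le ?_ ?_
        · -- π_z * X 0  lands in the middle piece
          rw [Submodule.span_le, Set.singleton_subset_iff]
          have hj0 : (⟨1, by omega⟩ : Fin d) ≠ z := by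
            rw [hzdef]
            intro h
            exact absurd (congrArg Fin.val h) (by simp)
          have heq : (∏ m ∈ Finset.univ.erase z, f m) * X 0
              = X 0 * ((∏ m ∈ Finset.univ \ {z, ⟨1, by omega⟩}, f m) * f ⟨1, by omega⟩) := by
            rw [hπz _ hj0]; ring
          rw [heq]
          apply Submodule.mem_sup_left
          apply Submodule.mem_sup_right
          refine Submodule.mem_map_of_mem ?_
          have : (∏ m ∈ Finset.univ \ {z, ⟨1, by omega⟩}, f m) * f ⟨1, by omega⟩
              ∈ Submodule.map
                (LinearMap.mulLeft K (∏ m ∈ Finset.univ \ {z, (⟨1, by omega⟩ : Fin d)}, f m)) U :=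
            Submodule.mem_map_of_mem (hfU _ hj0)
          exact (le_iSup₂ (f := fun (j : Fin d) (_ : j ≠ z) =>
            Submodule.map (LinearMap.mulLeft K (∏ m ∈ Finset.univ \ {z, j}, f m)) U)
            _ hj0) this
        · exact le_sup_left.trans le_sup_left
      · refine sup_le ?_ ?_
        · -- π_j * X 0 = X0^2 * q_j lands in the third piece
          rw [Submodule.span_le, Set.singleton_subset_iff]
          have heq : (∏ m ∈ Finset.univ.erase j, f m) * X 0
              = X 0 ^ 2 * (∏ m ∈ Finset.univ \ {z, j}, f m) := by
            rw [hsplit _ hj]; ring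
          rw [heq]
          apply Submodule.mem_sup_right
          refine Submodule.mem_map_of_mem ?_
          exact (le_iSup₂ (f := fun (j : Fin d) (_ : j ≠ z) =>
            Submodule.span K {∏ m ∈ Finset.univ \ {z, j}, f m}) _ hj)
            (Submodule.mem_span_singleton_self _)
        · -- π_j · U = X0 · (q_j · U) lands in the middle piece
          rw [hsplit _ hj, LinearMap.mulLeft_mul, Submodule.map_comp]
          have hstep : Submodule.map (LinearMap.mulLeft K (X 0))
              (Submodule.map (LinearMap.mulLeft K (∏ m ∈ Finset.univ \ {z, j}, f m)) U)
              ≤ Submodule.map (LinearMap.mulLeft K (X 0))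
                (⨆ (j : Fin d) (_ : j ≠ z),
                  Submodule.map (LinearMap.mulLeft K (∏ m ∈ Finset.univ \ {z, j}, f m)) U) :=
            Submodule.map_mono (le_iSup₂ (f := fun (j : Fin d) (_ : j ≠ z) =>
              Submodule.map (LinearMap.mulLeft K (∏ m ∈ Finset.univ \ {z, j}, f m)) U) _ hj)
          exact hstep.trans (le_sup_right.trans le_sup_left)
    · refine sup_le (sup_le ?_ ?_) ?_
      · exact (Submodule.map_mono hUle).trans
          (le_iSup (fun j : Fin d => Submodule.map
            (LinearMap.mulLeft K (∏ m ∈ Finset.univ.erase j, f m))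
            (homogeneousSubmodule (Fin (n+1)) K 1)) z)
      · rw [Submodule.map_iSup]
        refine iSup_le fun j => ?_
        rw [Submodule.map_iSup]
        refine iSup_le fun hj => ?_
        rw [← Submodule.map_comp, ← LinearMap.mulLeft_mul, ← hsplit _ hj]
        exact (Submodule.map_mono hUle).trans
          (le_iSup (fun j : Fin d => Submodule.map
            (LinearMap.mulLeft K (∏ m ∈ Finset.univ.erase j, f m))
            (homogeneousSubmodule (Fin (n+1)) K 1)) j)
      · rw [Submodule.map_iSup]
        refine iSup_le fun j => ?_
        rw [Submodule.map_iSup]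
        refine iSup_le fun hj => ?_
        rw [map_span_singleton, Submodule.span_le, Set.singleton_subset_iff]
        have heq : (X 0 : MvPolynomial (Fin (n+1)) K) ^ 2 * (∏ m ∈ Finset.univ \ {z, j}, f m)
            = (∏ m ∈ Finset.univ.erase j, f m) * X 0 := by
          rw [hsplit _ hj]; ring
        rw [heq]
        refine Submodule.mem_iSup_of_mem j ?_
        exact Submodule.mem_map_of_mem hX0R1
  · -- Disjoint A (B ⊔ C)
    refine Disjoint.mono ?_ ?_ (key_disj K n 0 1 2 (by omega) (by omega))
    · rw [hpow0]; exact hA_le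
    · refine sup_le_sup ?_ ?_
      · rw [hpow1]; exact Submodule.map_mono hB_le
      · exact Submodule.map_mono hC_le
  · refine Disjoint.mono ?_ ?_ (key_disj K n 1 0 2 (by omega) (by omega))
    · rw [hpow1]; exact Submodule.map_mono hB_le
    · refine sup_le_sup ?_ ?_
      · rw [hpow0]; exact hA_le
      · exact Submodule.map_mono hC_le
  · refine Disjoint.mono ?_ ?_ (key_disj K n 2 0 1 (by omega) (by omega))
    · exact Submodule.map_mono hC_le
    · refine sup_le_sup ?_ ?_
      · rw [hpow0]; exact hA_le
      · rw [hpow1]; exact Submodule.map_mono hB_le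
end

section
/- Let K be an algebraically closed field of characteristic zero and fix integers d ≥ 1 and s ≥ 1. Suppose that for some n_0 ≥ 1 one has s(dn_0+1) ≤ C(n_0+d,d) and there exist d-tuples f_1,…,f_s of linear forms in K[x_0,…,x_{n_0}] with dim_K Σ_{i=1}^s Σ_{j=1}^d π_j(f_i)·R_1 = s(dn_0+1). Then for every n ≥ n_0 there exist d-tuples g_1,…,g_s of linear forms in K[x_0,…,x_n] with dim_K Σ_{i=1}^s Σ_{j=1}^d π_j(g_i)·R_1 = min{s(dn+1), C(n+d,d)} (i.e., σ_s(Split_d(P^n)) is nondefective for all n ≥ n_0). -/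
set_option maxHeartbeats 1000000

open MvPolynomial

private lemma degree_one_single_s8 {σ : Type*} (m : σ →₀ ℕ) (h : m.degree = 1) :
    ∃ k, m = Finsupp.single k 1 := by
  classical
  have hne : m.support.Nonempty := by
    rw [Finsupp.support_nonempty_iff]
    rintro rfl
    simp [Finsupp.degree] at h
  obtain ⟨k, hk⟩ := hne
  refine ⟨k, ?_⟩
  have hk1 : m k = 1 := le_antisymm (h ▸ Finsupp.le_degree k m)
    (Nat.one_le_iff_ne_zero.2 (Finsupp.mem_support_iff.1 hk))
  rw [Finsupp.eq_single_iff]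
  refine ⟨fun a ha => ?_, hk1⟩
  simp only [Finset.mem_singleton]
  by_contra hak
  have h1a : 1 ≤ m a := Nat.one_le_iff_ne_zero.2 (Finsupp.mem_support_iff.1 ha)
  have hsub : ({a, k} : Finset σ) ⊆ m.support := by
    intro x hx
    simp only [Finset.mem_insert, Finset.mem_singleton] at hx
    rcases hx with rfl | rfl <;> assumption
  have : 2 ≤ m.degree := by
    calc 2 ≤ m a + m k := by omega
      _ = ∑ x ∈ ({a, k} : Finset σ), m x := by rw [Finset.sum_pair hak]
      _ ≤ m.degree := Finset.sum_le_sum_of_subset hsub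
  omega

private lemma homogeneousSubmodule_one_eq (σ K : Type*) [Field K] :
    homogeneousSubmodule σ K 1 = Submodule.span K (Set.range (X : σ → MvPolynomial σ K)) := by
  apply le_antisymm
  · intro p hp
    rw [mem_homogeneousSubmodule] at hp
    rw [← p.support_sum_monomial_coeff]
    apply Submodule.sum_mem
    intro m hm
    have h1 : m.degree = 1 := by
      rw [Finsupp.degree_eq_weight_one]
      exact hp (mem_support_iff.1 hm)
    obtain ⟨k, rfl⟩ := degree_one_single_s8 m h1
    have : monomial (Finsupp.single k 1) (coeff (Finsupp.single k 1) p)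
        = (coeff (Finsupp.single k 1) p) • X k := by
      rw [smul_eq_C_mul]
      show _ = C _ * monomial _ 1
      rw [C_mul_monomial, mul_one]
    rw [this]
    exact Submodule.smul_mem _ _ (Submodule.subset_span (Set.mem_range_self k))
  · rw [Submodule.span_le]
    rintro _ ⟨k, rfl⟩
    exact isHomogeneous_X _ _
private lemma sum_coeff_X {K : Type*} [Field K] {N : ℕ} {p : MvPolynomial (Fin N) K}
    (hp : p.IsHomogeneous 1) : ∑ k, coeff (Finsupp.single k 1) p • X k = p := by
  apply MvPolynomial.ext
  intro m
  rw [coeff_sum]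
  simp_rw [coeff_smul, coeff_X', smul_eq_mul]
  by_cases hm : m.degree = 1
  · obtain ⟨k₀, rfl⟩ := degree_one_single_s8 m hm
    rw [Finset.sum_eq_single k₀]
    · simp
    · intro k _ hk
      rw [if_neg, mul_zero]
      exact fun h => hk (Finsupp.single_left_inj one_ne_zero |>.1 h)
    · simp
  · have h0 : coeff m p = 0 := hp.coeff_eq_zero (by simpa using hm)
    rw [h0]
    apply Finset.sum_eq_zero
    intro k _
    rw [if_neg, mul_zero]
    rintro rfl
    exact hm (Finsupp.degree_single k 1)

private lemma pi_indep {K : Type*} [Field K] {n s d : ℕ} (hn : 1 ≤ n) (hd : 1 ≤ d)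
    (f : Fin s → Fin d → MvPolynomial (Fin (n + 1)) K)
    (hf : ∀ i j, (f i j).IsHomogeneous 1)
    (hrank : Module.finrank K ↥(Submodule.span K (Set.range
        (fun p : Fin s × Fin d × Fin (n + 1) =>
          (∏ m ∈ Finset.univ.erase p.2.1, f p.1 m) * X p.2.2))) = s * (d * n + 1)) :
    LinearIndependent K (fun p : Fin s × Fin d => ∏ m ∈ Finset.univ.erase p.2, f p.1 m) := by
  classical
  set π : Fin s → Fin d → MvPolynomial (Fin (n + 1)) K :=
    fun i j => ∏ m ∈ Finset.univ.erase j, f i m with hπdef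
  by_contra hdep
  rw [Fintype.not_linearIndependent_iff] at hdep
  obtain ⟨c, hc0, p₀, hcp₀⟩ := hdep
  set v : Fin s × Fin d × Fin (n + 1) → MvPolynomial (Fin (n + 1)) K :=
    fun p => π p.1 p.2.1 * X p.2.2 with hvdef
  set Φ : ((Fin s × Fin d × Fin (n + 1)) → K) →ₗ[K] MvPolynomial (Fin (n + 1)) K :=
    Fintype.linearCombination K v with hΦdef
  have hrangeΦ : LinearMap.range Φ = Submodule.span K (Set.range v) :=
    Fintype.range_linearCombination K v
  have hkerΦ : s * (d * n + 1) + Module.finrank K (LinearMap.ker Φ) = s * d * (n + 1) := by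
    have h := LinearMap.finrank_range_add_finrank_ker Φ
    rw [hrangeΦ] at h
    rw [hrank] at h
    rw [h, Module.finrank_fintype_fun_eq_card]
    simp [Fintype.card_prod]
    ring
  -- block classification
  set good : Fin s → Prop := fun i => ∀ j, f i j ≠ 0 with hgooddef
  have hbad : ∀ i, ¬good i → ∃ j, f i j = 0 := by
    intro i h
    rw [hgooddef] at h
    push_neg at h
    simpa using h
  set j₁ : Fin s → Fin d := fun i =>
    if h : good i then ⟨0, hd⟩ else Classical.choose (hbad i h) with hj₁def
  have hj₁ : ∀ i, ¬good i → f i (j₁ i) = 0 := by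
    intro i h
    rw [hj₁def]
    simp only [dif_neg h]
    exact Classical.choose_spec (hbad i h)
  set A : Fin s → Fin d → Fin (n + 1) → K := fun i j k =>
    if good i then coeff (Finsupp.single k 1) (f i j)
    else (if k = (⟨0, Nat.succ_pos n⟩ : Fin (n+1)) then 1 else 0) with hAdef
  have hA1 : ∀ i j, good i → ∑ k, A i j k • X k = f i j := by
    intro i j h
    simp only [hAdef, if_pos h]
    exact sum_coeff_X (hf i j)
  have hA2 : ∀ i j, ¬good i →
      ∑ k, A i j k • X k = (X ⟨0, Nat.succ_pos n⟩ : MvPolynomial (Fin (n + 1)) K) := by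
    intro i j h
    simp only [hAdef, if_neg h, ite_smul, zero_smul]
    rw [Finset.sum_ite_eq' Finset.univ]
    simp
  have hAne : ∀ i j, A i j ≠ 0 := by
    intro i j hA0
    by_cases h : good i
    · apply h j
      rw [← hA1 i j h]
      apply Finset.sum_eq_zero
      intro k _
      have hk0 : A i j k = 0 := congrFun hA0 k
      rw [hk0, zero_smul]
    · have := congrFun hA0 ⟨0, Nat.succ_pos n⟩
      simp [hAdef, if_neg h] at this
  -- the map L whose kernel is T
  set L : ((Fin s × Fin d) → K) →ₗ[K] (Fin s → K) :=
    { toFun := fun μ i => if good i then ∑ j, μ (i, j) else μ (i, j₁ i)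
      map_add' := by
        intro μ ν; funext i
        simp only [Pi.add_apply]
        split_ifs <;> simp [Finset.sum_add_distrib]
      map_smul' := by
        intro a μ; funext i
        simp only [Pi.smul_apply, smul_eq_mul, RingHom.id_apply]
        split_ifs <;> simp [Finset.mul_sum] } with hLdef
  have hLsurj : Function.Surjective L := by
    intro t
    set w : Fin s → Fin d := fun i => if good i then ⟨0, hd⟩ else j₁ i with hwdef
    refine ⟨fun p => if p.2 = w p.1 then t p.1 else 0, ?_⟩
    funext i
    by_cases h : good i
    · simp only [hLdef, LinearMap.coe_mk, AddHom.coe_mk, if_pos h]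
      rw [Finset.sum_ite_eq' Finset.univ]
      simp
    · simp only [hLdef, LinearMap.coe_mk, AddHom.coe_mk, if_neg h, hwdef]
      simp
  have hLrank : s + Module.finrank K (LinearMap.ker L) = s * d := by
    have h := LinearMap.finrank_range_add_finrank_ker L
    rw [LinearMap.range_eq_top.2 hLsurj] at h
    simpa [Module.finrank_fintype_fun_eq_card, finrank_top] using h
  -- the map Ψ
  set Ψ : ((Fin s × Fin d) → K) →ₗ[K] ((Fin s × Fin d × Fin (n + 1)) → K) :=
    { toFun := fun μ p => μ (p.1, p.2.1) * A p.1 p.2.1 p.2.2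
      map_add' := by intro μ ν; funext p; simp [add_mul]
      map_smul' := by intro a μ; funext p; simp [mul_assoc]  } with hΨdef
  have hΨinj : Function.Injective Ψ := by
    rw [injective_iff_map_eq_zero]
    intro μ hμ
    funext q
    obtain ⟨k, hk⟩ : ∃ k, A q.1 q.2 k ≠ 0 := by
      by_contra h; push_neg at h; exact hAne q.1 q.2 (funext h)
    have h := congrFun hμ (q.1, q.2, k)
    simp only [hΨdef, LinearMap.coe_mk, AddHom.coe_mk, Pi.zero_apply] at h
    rcases mul_eq_zero.1 h with h' | h'
    · simpa using h'
    · exact absurd h' hk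
  have hΨker : ∀ μ, μ ∈ LinearMap.ker L → Ψ μ ∈ LinearMap.ker Φ := by
    intro μ hμ
    rw [LinearMap.mem_ker] at hμ ⊢
    have hcomp : Φ (Ψ μ) = ∑ i, ∑ j, μ (i, j) • (π i j * ∑ k, A i j k • X k) := by
      rw [hΦdef]
      rw [Fintype.linearCombination_apply]
      rw [Fintype.sum_prod_type]
      refine Finset.sum_congr rfl fun i _ => ?_
      rw [Fintype.sum_prod_type]
      refine Finset.sum_congr rfl fun j _ => ?_
      rw [Finset.mul_sum, Finset.smul_sum]
      refine Finset.sum_congr rfl fun k _ => ?_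
      show (μ (i, j) * A i j k) • (π i j * X k) = μ (i, j) • (π i j * (A i j k • X k))
      rw [mul_smul, mul_smul_comm]
    rw [hcomp]
    apply Finset.sum_eq_zero
    intro i _
    by_cases hgi : good i
    · have hstep : ∀ j ∈ Finset.univ, μ (i, j) • (π i j * ∑ k, A i j k • X k)
          = μ (i, j) • (∏ m, f i m) := by
        intro j _
        rw [hA1 i j hgi, hπdef]
        rw [Finset.prod_erase_mul Finset.univ _ (Finset.mem_univ j)]
      rw [Finset.sum_congr rfl hstep, ← Finset.sum_smul]
      have h0 : ∑ j, μ (i, j) = 0 := by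
        have h := congrFun hμ i
        simpa [hLdef, if_pos hgi] using h
      rw [h0, zero_smul]
    · apply Finset.sum_eq_zero
      intro j _
      by_cases hj : j = j₁ i
      · have h0 : μ (i, j) = 0 := by
          subst hj
          have h := congrFun hμ i
          simpa [hLdef, if_neg hgi] using h
        rw [h0, zero_smul]
      · have hπ0 : π i j = 0 := by
          rw [hπdef]
          exact Finset.prod_eq_zero
            (Finset.mem_erase.2 ⟨fun h => hj h.symm, Finset.mem_univ _⟩) (hj₁ i hgi)
        rw [hπ0, zero_mul, smul_zero]
  set T : Submodule K ((Fin s × Fin d × Fin (n + 1)) → K) :=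
    Submodule.map Ψ (LinearMap.ker L) with hTdef
  have hTrank : Module.finrank K T = Module.finrank K (LinearMap.ker L) :=
    (Submodule.equivMapOfInjective Ψ hΨinj _).finrank_eq.symm
  have hTker : T ≤ LinearMap.ker Φ := by
    rintro x ⟨μ, hμ, rfl⟩
    exact hΨker μ hμ
  -- the map u
  set u : (Fin (n + 1) → K) →ₗ[K] ((Fin s × Fin d × Fin (n + 1)) → K) :=
    { toFun := fun ℓ p => c (p.1, p.2.1) * ℓ p.2.2
      map_add' := by intro ℓ ℓ'; funext p; simp [mul_add]
      map_smul' := by intro a ℓ; funext p; simp; ring } with hudef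
  have huinj : Function.Injective u := by
    rw [injective_iff_map_eq_zero]
    intro ℓ hℓ
    funext k
    have h := congrFun hℓ (p₀.1, p₀.2, k)
    simp only [hudef, LinearMap.coe_mk, AddHom.coe_mk, Pi.zero_apply] at h
    rcases mul_eq_zero.1 h with h' | h'
    · exact absurd (by simpa using h') hcp₀
    · simpa using h'
  have hurank : Module.finrank K (LinearMap.range u) = n + 1 := by
    rw [LinearMap.finrank_range_of_inj huinj, Module.finrank_fintype_fun_eq_card]
    simp
  have huker : LinearMap.range u ≤ LinearMap.ker Φ := by
    rintro x ⟨ℓ, rfl⟩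
    rw [LinearMap.mem_ker]
    have hcomp : Φ (u ℓ) = ∑ i, ∑ j, c (i, j) • (π i j * ∑ k, ℓ k • X k) := by
      rw [hΦdef, Fintype.linearCombination_apply, Fintype.sum_prod_type]
      refine Finset.sum_congr rfl fun i _ => ?_
      rw [Fintype.sum_prod_type]
      refine Finset.sum_congr rfl fun j _ => ?_
      rw [Finset.mul_sum, Finset.smul_sum]
      refine Finset.sum_congr rfl fun k _ => ?_
      show (c (i, j) * ℓ k) • (π i j * X k) = c (i, j) • (π i j * (ℓ k • X k))
      rw [mul_smul, mul_smul_comm]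
    rw [hcomp]
    have hstep : ∀ i ∈ Finset.univ, ∑ j, c (i, j) • (π i j * ∑ k, ℓ k • X k)
        = (∑ j, c (i, j) • π i j) * ∑ k, ℓ k • X k := by
      intro i _
      rw [Finset.sum_mul]
      exact Finset.sum_congr rfl fun j _ => (smul_mul_assoc (c (i, j)) (π i j) _).symm
    rw [Finset.sum_congr rfl hstep, ← Finset.sum_mul]
    have h0 : ∑ i, ∑ j, c (i, j) • π i j = 0 := by
      have h' := hc0
      rw [Fintype.sum_prod_type] at h'
      simpa [hπdef] using h'
    rw [h0, zero_mul]
  -- bounding the intersection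
  have hinf : Module.finrank K ↥(T ⊓ LinearMap.range u) ≤ 1 := by
    have hle : T ⊓ LinearMap.range u ≤
        Submodule.map u (Submodule.span K {fun k => A p₀.1 p₀.2 k}) := by
      rintro x ⟨⟨μ, hμ, rfl⟩, ⟨ℓ, hℓ⟩⟩
      refine ⟨ℓ, ?_, hℓ⟩
      have hc : c (p₀.1, p₀.2) ≠ 0 := by rw [Prod.mk.eta]; exact hcp₀
      have hℓeq : ℓ = (μ (p₀.1, p₀.2) / c (p₀.1, p₀.2)) • (fun k => A p₀.1 p₀.2 k) := by
        funext k
        have h := congrFun hℓ (p₀.1, p₀.2, k)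
        simp only [hudef, hΨdef, LinearMap.coe_mk, AddHom.coe_mk] at h
        show ℓ k = (μ (p₀.1, p₀.2) / c (p₀.1, p₀.2)) * A p₀.1 p₀.2 k
        apply mul_left_cancel₀ hc
        rw [h]
        field_simp
      rw [hℓeq]
      exact Submodule.smul_mem _ _ (Submodule.mem_span_singleton_self _)
    refine le_trans (Submodule.finrank_mono hle) ?_
    refine le_trans (Submodule.finrank_map_le u _) ?_
    by_cases hA0 : (fun k => A p₀.1 p₀.2 k) = (0 : Fin (n+1) → K)
    · rw [hA0, Submodule.span_zero_singleton]
      simp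
    · rw [finrank_span_singleton hA0]
  -- conclude
  have hsup : T ⊔ LinearMap.range u ≤ LinearMap.ker Φ := sup_le hTker huker
  have h1 := Submodule.finrank_sup_add_finrank_inf_eq T (LinearMap.range u)
  have h2 : Module.finrank K ↥(T ⊔ LinearMap.range u)
      ≤ Module.finrank K (LinearMap.ker Φ) := Submodule.finrank_mono hsup
  have hxy : Module.finrank K (LinearMap.ker Φ) = Module.finrank K (LinearMap.ker L) := by
    have key : s * (d * n + 1) + Module.finrank K (LinearMap.ker L) = s * d * (n + 1) := by
      calc s * (d * n + 1) + Module.finrank K (LinearMap.ker L)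
          = s * (d * n) + (s + Module.finrank K (LinearMap.ker L)) := by ring
        _ = s * (d * n) + s * d := by rw [hLrank]
        _ = s * d * (n + 1) := by ring
    exact Nat.add_left_cancel (hkerΦ.trans key.symm)
  rw [hTrank, hurank] at h1
  rw [hxy] at h2
  omega

private lemma step_rank {K : Type*} [Field K] {n s d : ℕ}
    (f : Fin s → Fin d → MvPolynomial (Fin (n + 1)) K)
    (hind : LinearIndependent K
      (fun p : Fin s × Fin d => ∏ m ∈ Finset.univ.erase p.2, f p.1 m)) :
    Module.finrank K ↥(Submodule.span K (Set.range (fun p : Fin s × Fin d × Fin (n + 2) =>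
        (∏ m ∈ Finset.univ.erase p.2.1, rename (Fin.castSucc) (f p.1 m)) * X p.2.2)))
      = Module.finrank K ↥(Submodule.span K (Set.range (fun p : Fin s × Fin d × Fin (n + 1) =>
        (∏ m ∈ Finset.univ.erase p.2.1, f p.1 m) * X p.2.2))) + s * d := by
  classical
  set σₗ : MvPolynomial (Fin (n + 1)) K →ₗ[K] MvPolynomial (Fin (n + 2)) K :=
    (rename (Fin.castSucc : Fin (n + 1) → Fin (n + 2)) :
      MvPolynomial (Fin (n + 1)) K →ₐ[K] MvPolynomial (Fin (n + 2)) K).toLinearMap with hσdef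
  have hinj : Function.Injective σₗ := rename_injective _ (Fin.castSucc_injective (n + 1))
  set v : Fin s × Fin d × Fin (n + 1) → MvPolynomial (Fin (n + 1)) K :=
    fun p => (∏ m ∈ Finset.univ.erase p.2.1, f p.1 m) * X p.2.2 with hvdef
  set v₁ : Fin s × Fin d × Fin (n + 1) → MvPolynomial (Fin (n + 2)) K :=
    fun p => rename Fin.castSucc ((∏ m ∈ Finset.univ.erase p.2.1, f p.1 m) * X p.2.2) with hv₁def
  set v₂ : Fin s × Fin d → MvPolynomial (Fin (n + 2)) K :=
    fun q => rename Fin.castSucc (∏ m ∈ Finset.univ.erase q.2, f q.1 m)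
      * X (Fin.last (n + 1)) with hv₂def
  have hprod : ∀ (i : Fin s) (j : Fin d),
      ∏ m ∈ Finset.univ.erase j, rename (Fin.castSucc) (f i m)
        = rename Fin.castSucc (∏ m ∈ Finset.univ.erase j, f i m) := by
    intro i j
    rw [map_prod]
  set S₁ : Submodule K (MvPolynomial (Fin (n + 2)) K) :=
    Submodule.span K (Set.range v₁) with hS₁def
  set S₂ : Submodule K (MvPolynomial (Fin (n + 2)) K) :=
    Submodule.span K (Set.range v₂) with hS₂def
  haveI : FiniteDimensional K S₁ := FiniteDimensional.span_of_finite K (Set.finite_range v₁)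
  haveI : FiniteDimensional K S₂ := FiniteDimensional.span_of_finite K (Set.finite_range v₂)
  have hsplit : Submodule.span K (Set.range (fun p : Fin s × Fin d × Fin (n + 2) =>
      (∏ m ∈ Finset.univ.erase p.2.1, rename (Fin.castSucc) (f p.1 m)) * X p.2.2))
      = S₁ ⊔ S₂ := by
    apply le_antisymm
    · rw [Submodule.span_le]
      rintro x ⟨⟨i, j, k⟩, rfl⟩
      simp only
      rw [hprod i j]
      induction k using Fin.lastCases with
      | last =>
        apply Submodule.mem_sup_right
        exact Submodule.subset_span ⟨(i, j), rfl⟩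
      | cast k =>
        apply Submodule.mem_sup_left
        apply Submodule.subset_span
        refine ⟨(i, j, k), ?_⟩
        rw [hv₁def]
        simp only [map_mul, rename_X]
    · apply sup_le
      · rw [Submodule.span_le]
        rintro x ⟨⟨i, j, k⟩, rfl⟩
        apply Submodule.subset_span
        refine ⟨(i, j, Fin.castSucc k), ?_⟩
        simp only [hprod i j, hv₁def, map_mul, rename_X]
      · rw [Submodule.span_le]
        rintro x ⟨⟨i, j⟩, rfl⟩
        apply Submodule.subset_span
        refine ⟨(i, j, Fin.last (n + 1)), ?_⟩
        simp only [hprod i j, hv₂def]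
  have hS₁map : S₁ = Submodule.map σₗ (Submodule.span K (Set.range v)) := by
    rw [Submodule.map_span, ← Set.range_comp]
    rfl
  have hS₁rank : Module.finrank K S₁
      = Module.finrank K ↥(Submodule.span K (Set.range v)) := by
    rw [hS₁map]
    exact (Submodule.equivMapOfInjective σₗ hinj _).finrank_eq.symm
  have hindep₂ : LinearIndependent K v₂ := by
    have hker : LinearMap.ker ((LinearMap.mulRight K (X (Fin.last (n + 1)))
        : MvPolynomial (Fin (n + 2)) K →ₗ[K] MvPolynomial (Fin (n + 2)) K) ∘ₗ σₗ) = ⊥ := by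
      rw [LinearMap.ker_eq_bot, LinearMap.coe_comp]
      exact Function.Injective.comp
        (mul_left_injective₀ (MvPolynomial.X_ne_zero (Fin.last (n + 1)))) hinj
    have h2 := LinearIndependent.map' hind ((LinearMap.mulRight K (X (Fin.last (n + 1)))
        : MvPolynomial (Fin (n + 2)) K →ₗ[K] MvPolynomial (Fin (n + 2)) K) ∘ₗ σₗ) hker
    have hveq : v₂ = (((LinearMap.mulRight K (X (Fin.last (n + 1)))
        : MvPolynomial (Fin (n + 2)) K →ₗ[K] MvPolynomial (Fin (n + 2)) K) ∘ₗ σₗ)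
        ∘ (fun p : Fin s × Fin d => ∏ m ∈ Finset.univ.erase p.2, f p.1 m)) := by
      funext p
      simp only [hv₂def, Function.comp_apply, LinearMap.coe_comp, LinearMap.mulRight_apply,
        hσdef, AlgHom.toLinearMap_apply]
    exact hveq ▸ h2
  have hS₂rank : Module.finrank K S₂ = s * d := by
    rw [hS₂def, finrank_span_eq_card hindep₂]
    simp [Fintype.card_prod]
  have hdisj : S₁ ⊓ S₂ = ⊥ := by
    rw [eq_bot_iff]
    rintro x ⟨hx1, hx2⟩
    rw [hS₁map] at hx1
    obtain ⟨a, -, rfl⟩ := hx1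
    have hx2' : σₗ a ∈ LinearMap.range (LinearMap.mulRight K (X (Fin.last (n + 1)))
        : MvPolynomial (Fin (n + 2)) K →ₗ[K] MvPolynomial (Fin (n + 2)) K) := by
      refine Submodule.span_le.2 ?_ hx2
      rintro y ⟨⟨i, j⟩, rfl⟩
      exact ⟨rename Fin.castSucc (∏ m ∈ Finset.univ.erase j, f i m), rfl⟩
    obtain ⟨b, hb⟩ := hx2'
    rw [Submodule.mem_bot]
    by_contra hne
    obtain ⟨m, hm⟩ := (MvPolynomial.support_nonempty.2 hne)
    have hcm : coeff m (σₗ a) ≠ 0 := MvPolynomial.mem_support_iff.1 hm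
    have hlast : m (Fin.last (n + 1)) = 0 := by
      by_contra h'
      apply hcm
      apply coeff_rename_eq_zero
      intro u hu
      exfalso
      apply h'
      rw [← hu]
      apply Finsupp.mapDomain_notin_range
      rintro ⟨x, hx⟩
      exact (Fin.castSucc_lt_last x).ne hx
    apply hcm
    rw [← hb, LinearMap.mulRight_apply, coeff_mul_X']
    rw [if_neg]
    simp [Finsupp.mem_support_iff, hlast]
  rw [hsplit]
  have h := Submodule.finrank_sup_add_finrank_inf_eq S₁ S₂
  rw [hdisj, finrank_bot, add_zero] at h
  rw [h, hS₁rank, hS₂rank]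

private lemma choose_step {s d n : ℕ} (hd : 1 ≤ d)
    (h : s * (d * n + 1) ≤ (n + d).choose d) :
    s * (d * (n + 1) + 1) ≤ (n + 1 + d).choose d := by
  obtain ⟨e, rfl⟩ : ∃ e, d = e + 1 := ⟨d - 1, by omega⟩
  have hid : (n + (e + 1)).choose (e + 1) * (e + 1)
      = (n + (e + 1)).choose e * (n + 1) := by
    have h1 := Nat.choose_succ_right_eq (n + (e + 1)) e
    rw [h1]
    congr 1
    omega
  have h3 : s * (e + 1) ≤ (n + (e + 1)).choose e := by
    have key : s * (e + 1) * ((e + 1) * n + 1)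
        ≤ (n + (e + 1)).choose e * ((e + 1) * n + 1) := by
      calc s * (e + 1) * ((e + 1) * n + 1)
          = s * ((e + 1) * n + 1) * (e + 1) := by ring
        _ ≤ (n + (e + 1)).choose (e + 1) * (e + 1) := Nat.mul_le_mul_right _ h
        _ = (n + (e + 1)).choose e * (n + 1) := hid
        _ ≤ (n + (e + 1)).choose e * ((e + 1) * n + 1) :=
            Nat.mul_le_mul_left _ (by
              have := Nat.le_mul_of_pos_left n (show 0 < e + 1 by omega)
              omega)
    exact Nat.le_of_mul_le_mul_right key (by omega)
  have hpascal : (n + 1 + (e + 1)).choose (e + 1)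
      = (n + (e + 1)).choose e + (n + (e + 1)).choose (e + 1) := by
    rw [show n + 1 + (e + 1) = n + (e + 1) + 1 by omega]
    exact Nat.choose_succ_succ (n + (e + 1)) e
  calc s * ((e + 1) * (n + 1) + 1) = s * ((e + 1) * n + 1) + s * (e + 1) := by ring
    _ ≤ (n + (e + 1)).choose (e + 1) + (n + (e + 1)).choose e := add_le_add h h3
    _ = (n + 1 + (e + 1)).choose (e + 1) := by rw [hpascal, Nat.add_comm]

private lemma sup_eq_span {K : Type*} [Field K] {N s d : ℕ}
    (f : Fin s → Fin d → MvPolynomial (Fin N) K) :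
    (⨆ i : Fin s, ⨆ j : Fin d,
        Submodule.map (LinearMap.mulLeft K (∏ m ∈ Finset.univ.erase j, f i m))
          (homogeneousSubmodule (Fin N) K 1))
      = Submodule.span K (Set.range fun p : Fin s × Fin d × Fin N =>
          (∏ m ∈ Finset.univ.erase p.2.1, f p.1 m) * X p.2.2) := by
  apply le_antisymm
  · apply iSup_le
    intro i
    apply iSup_le
    intro j
    rw [homogeneousSubmodule_one_eq, Submodule.map_span, Submodule.span_le]
    rintro x ⟨y, ⟨k, rfl⟩, rfl⟩
    exact Submodule.subset_span ⟨(i, j, k), rfl⟩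
  · rw [Submodule.span_le]
    rintro x ⟨⟨i, j, k⟩, rfl⟩
    apply Submodule.mem_iSup_of_mem i
    apply Submodule.mem_iSup_of_mem j
    exact ⟨X k, isHomogeneous_X K k, rfl⟩

/-- Theorem 1.3 of the paper: If `s(dn_0+1) ≤ C(n_0+d,d)` and there exist
`d`-tuples `f_1,…,f_s` of linear forms in `K[x_0,…,x_{n_0}]` with
`dim Σ_i Σ_j π_j(f_i)·R_1 = s(dn_0+1)`, then for every `n ≥ n_0` there exist `d`-tuples
`g_1,…,g_s` of linear forms in `K[x_0,…,x_n]` with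
`dim Σ_i Σ_j π_j(g_i)·R_1 = min{s(dn+1), C(n+d,d)}`
(i.e. `σ_s(Split_d(ℙⁿ))` is nondefective for all `n ≥ n_0`). -/
theorem stmt8 (K : Type*) [Field K] [IsAlgClosed K] [CharZero K]
    (d s n₀ : ℕ) (hd : 1 ≤ d) (hs : 1 ≤ s) (hn₀ : 1 ≤ n₀)
    (hsub : s * (d * n₀ + 1) ≤ (n₀ + d).choose d)
    (hex : ∃ f : Fin s → Fin d → MvPolynomial (Fin (n₀ + 1)) K,
      (∀ i j, (f i j).IsHomogeneous 1) ∧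
      Module.finrank K ↥(⨆ i : Fin s, ⨆ j : Fin d,
          Submodule.map (LinearMap.mulLeft K (∏ m ∈ Finset.univ.erase j, f i m))
            (homogeneousSubmodule (Fin (n₀ + 1)) K 1))
        = s * (d * n₀ + 1)) :
    ∀ n : ℕ, n₀ ≤ n →
      ∃ g : Fin s → Fin d → MvPolynomial (Fin (n + 1)) K,
        (∀ i j, (g i j).IsHomogeneous 1) ∧
        Module.finrank K ↥(⨆ i : Fin s, ⨆ j : Fin d,
            Submodule.map (LinearMap.mulLeft K (∏ m ∈ Finset.univ.erase j, g i m))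
              (homogeneousSubmodule (Fin (n + 1)) K 1))
          = min (s * (d * n + 1)) ((n + d).choose d) := by
  have main : ∀ n : ℕ, n₀ ≤ n →
      s * (d * n + 1) ≤ (n + d).choose d ∧
      ∃ g : Fin s → Fin d → MvPolynomial (Fin (n + 1)) K,
        (∀ i j, (g i j).IsHomogeneous 1) ∧
        Module.finrank K ↥(Submodule.span K (Set.range fun p : Fin s × Fin d × Fin (n + 1) =>
            (∏ m ∈ Finset.univ.erase p.2.1, g p.1 m) * X p.2.2))
          = s * (d * n + 1) := by
    intro n hn
    induction n, hn using Nat.le_induction with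
    | base =>
      obtain ⟨f, hf, hr⟩ := hex
      rw [sup_eq_span f] at hr
      exact ⟨hsub, f, hf, hr⟩
    | succ n hn ih =>
      obtain ⟨hle, f, hf, hr⟩ := ih
      refine ⟨choose_step hd hle, fun i j => rename Fin.castSucc (f i j),
        fun i j => (hf i j).rename_isHomogeneous, ?_⟩
      have hind := pi_indep (le_trans hn₀ hn) hd f hf hr
      have hstep := step_rank f hind
      rw [hr] at hstep
      rw [hstep]
      ring
  intro n hn
  obtain ⟨hle, g, hg, hr⟩ := main n hn
  refine ⟨g, hg, ?_⟩
  rw [sup_eq_span g, hr, min_eq_left hle]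
end

section
/- Let K be an algebraically closed field of characteristic zero and let s, n be integers with 2 ≤ s and 2s ≤ n. Then for every choice of linear forms ℓ_1,…,ℓ_{2s} in K[x_0,…,x_n], the subspace Σ_{i=1}^{2s} ℓ_i·R_1 of R_2 has dimension at most s(2n+1) − 2s(s−1), which is strictly less than min{s(2n+1), C(n+2,2)} (i.e., σ_s(Split_2(P^n)) is defective for 2 ≤ s ≤ n/2). -/
set_option maxHeartbeats 1000000

open MvPolynomial
open Submodule Module


lemma deg_one_single {σ : Type*} (d : σ →₀ ℕ) (h : Finsupp.degree d = 1) :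
    ∃ i, d = Finsupp.single i 1 := by
  classical
  have hd0 : d ≠ 0 := by
    intro h0; rw [h0, map_zero] at h; exact one_ne_zero h.symm
  obtain ⟨i, hi⟩ := Finsupp.ne_iff.mp hd0
  simp only [Finsupp.coe_zero, Pi.zero_apply] at hi
  have hle : d i ≤ 1 := h ▸ Finsupp.le_degree i d
  have hdi : d i = 1 := le_antisymm hle (Nat.one_le_iff_ne_zero.mpr hi)
  refine ⟨i, ?_⟩
  ext j
  by_cases hj : j = i
  · subst hj; simp [hdi]
  · simp only [Finsupp.single_apply, if_neg (Ne.symm hj)]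
    by_contra hdj
    have hij : ({i, j} : Finset σ) ⊆ d.support := by
      intro k hk
      simp only [Finset.mem_insert, Finset.mem_singleton] at hk
      rcases hk with rfl | rfl <;> simp [Finsupp.mem_support_iff, hi, hdj]
    have h2 : d i + d j ≤ Finsupp.degree d := by
      rw [Finsupp.degree]
      calc d i + d j = ∑ k ∈ ({i, j} : Finset σ), d k := by
            rw [Finset.sum_pair (Ne.symm hj)]
        _ ≤ _ := Finset.sum_le_sum_of_subset hij
    omega

lemma homSub_one_eq (K : Type*) [Field K] (n : ℕ) :
    homogeneousSubmodule (Fin (n + 1)) K 1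
      = Submodule.span K (Set.range (X : Fin (n + 1) → MvPolynomial (Fin (n + 1)) K)) := by
  apply le_antisymm
  · intro p hp
    rw [mem_homogeneousSubmodule] at hp
    rw [p.as_sum]
    apply Submodule.sum_mem
    intro d hd
    have hdeg : Finsupp.degree d = 1 := by
      rw [Finsupp.degree_eq_weight_one]; exact hp (mem_support_iff.mp hd)
    obtain ⟨i, rfl⟩ := deg_one_single d hdeg
    have : (monomial (Finsupp.single i 1)) (coeff (Finsupp.single i 1) p)
        = (coeff (Finsupp.single i 1) p) • (X i : MvPolynomial (Fin (n+1)) K) := by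
      rw [smul_eq_C_mul, X, C_mul_monomial, mul_one]
    rw [this]
    exact Submodule.smul_mem _ _ (Submodule.subset_span ⟨i, rfl⟩)
  · rw [Submodule.span_le]
    rintro _ ⟨i, rfl⟩
    exact isHomogeneous_X K i

lemma R1_findim (K : Type*) [Field K] (n : ℕ) :
    FiniteDimensional K ↥(homogeneousSubmodule (Fin (n + 1)) K 1) := by
  rw [homSub_one_eq]
  exact FiniteDimensional.span_of_finite K (Set.finite_range _)

lemma R1_finrank_le (K : Type*) [Field K] (n : ℕ) :
    finrank K ↥(homogeneousSubmodule (Fin (n + 1)) K 1) ≤ n + 1 := by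
  rw [homSub_one_eq]
  simpa [Set.finrank] using finrank_range_le_card (R := K) (X : Fin (n + 1) → MvPolynomial (Fin (n + 1)) K)

lemma main_bound (K : Type*) [Field K] (n m : ℕ)
    (ℓ : Fin m → MvPolynomial (Fin (n + 1)) K) (hℓ : ∀ i, (ℓ i).IsHomogeneous 1)
    (T : Finset (Fin m)) :
    FiniteDimensional K ↥(⨆ i ∈ T,
        Submodule.map (LinearMap.mulLeft K (ℓ i)) (homogeneousSubmodule (Fin (n + 1)) K 1)) ∧
    finrank K ↥(Submodule.span K (ℓ '' ↑T)) ≤ n + 1 ∧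
    2 * finrank K ↥(⨆ i ∈ T,
        Submodule.map (LinearMap.mulLeft K (ℓ i)) (homogeneousSubmodule (Fin (n + 1)) K 1))
      + finrank K ↥(Submodule.span K (ℓ '' ↑T)) * (finrank K ↥(Submodule.span K (ℓ '' ↑T)) - 1)
      ≤ 2 * finrank K ↥(Submodule.span K (ℓ '' ↑T)) * (n + 1) := by
  classical
  haveI := R1_findim K n
  set R1 := homogeneousSubmodule (Fin (n + 1)) K 1 with hR1
  set V : Fin m → Submodule K (MvPolynomial (Fin (n + 1)) K) :=
    fun i => Submodule.map (LinearMap.mulLeft K (ℓ i)) R1 with hV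
  have hℓR1 : ∀ i, ℓ i ∈ R1 := fun i => (mem_homogeneousSubmodule 1 _).mpr (hℓ i)
  induction T using Finset.induction with
  | empty =>
      have h1 : (⨆ i ∈ (∅ : Finset (Fin m)), V i) = ⊥ := by simp
      have h2 : Submodule.span K (ℓ '' ↑(∅ : Finset (Fin m)))
          = (⊥ : Submodule K (MvPolynomial (Fin (n + 1)) K)) := by
        simp
      rw [h1, h2, finrank_bot]
      exact ⟨inferInstance, by omega, by omega⟩
  | @insert a T ha IH =>
      obtain ⟨IHfd, IHd, IHrank⟩ := IH
      haveI := IHfd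
      haveI : FiniteDimensional K ↥(Submodule.span K (ℓ '' ↑T)) :=
        FiniteDimensional.span_of_finite K ((T.finite_toSet).image ℓ)
      have himg : ℓ '' ↑(insert a T) = insert (ℓ a) (ℓ '' ↑T) := by
        rw [Finset.coe_insert, Set.image_insert_eq]
      have hsupins : (⨆ i ∈ insert a T, V i) = V a ⊔ ⨆ i ∈ T, V i := by
        simp [Finset.mem_insert, iSup_or, iSup_sup_eq]
      have hmulU : ∀ p ∈ Submodule.span K (ℓ '' ↑T), ∀ g, g ∈ R1 → p * g ∈ ⨆ i ∈ T, V i := by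
        intro p hp
        induction hp using Submodule.span_induction with
        | mem x hx =>
            intro g hg
            obtain ⟨i, hiT, rfl⟩ := hx
            exact (le_iSup₂ (f := fun i (_ : i ∈ T) => V i) i hiT) ⟨g, hg, rfl⟩
        | zero => intro g hg; rw [zero_mul]; exact Submodule.zero_mem _
        | add x y _ _ hx hy =>
            intro g hg; rw [add_mul]; exact Submodule.add_mem _ (hx g hg) (hy g hg)
        | smul c x _ hx =>
            intro g hg; rw [smul_mul_assoc]; exact Submodule.smul_mem _ c (hx g hg)
      by_cases hmem : ℓ a ∈ Submodule.span K (ℓ '' ↑T)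
      · -- span unchanged, sup unchanged
        have hspan : Submodule.span K (ℓ '' ↑(insert a T)) = Submodule.span K (ℓ '' ↑T) := by
          rw [himg, Submodule.span_insert_eq_span hmem]
        have hVle : V a ≤ ⨆ i ∈ T, V i := by
          rintro _ ⟨g, hg, rfl⟩
          simp only [LinearMap.mulLeft_apply]
          exact hmulU _ hmem g hg
        have hsup : (⨆ i ∈ insert a T, V i) = ⨆ i ∈ T, V i := by
          rw [hsupins, sup_eq_right.mpr hVle]
        rw [hsup, hspan]
        exact ⟨IHfd, IHd, IHrank⟩
      · -- new independent form
        have hne : ℓ a ≠ 0 := fun h => hmem (by rw [h]; exact Submodule.zero_mem _)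
        haveI : FiniteDimensional K ↥(V a) := by infer_instance
        haveI : FiniteDimensional K ↥(V a ⊔ ⨆ i ∈ T, V i) := inferInstance
        set W := Submodule.span K (ℓ '' ↑T) with hW
        set d := finrank K ↥W with hd
        clear_value d
        set U := ⨆ i ∈ T, V i with hU
        -- the intersection contains ℓ a • W
        have hinf : Submodule.map (LinearMap.mulLeft K (ℓ a)) W ≤ V a ⊓ U := by
          apply le_inf
          · apply Submodule.map_mono
            rw [hW, Submodule.span_le]
            rintro _ ⟨i, _, rfl⟩
            exact hℓR1 i
          · rintro _ ⟨w, hw, rfl⟩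
            simp only [LinearMap.mulLeft_apply]
            rw [mul_comm]
            exact hmulU w hw (ℓ a) (hℓR1 a)
        have hinj : Function.Injective (LinearMap.mulLeft K (ℓ a)) := by
          intro x y hxy
          simp only [LinearMap.mulLeft_apply] at hxy
          exact mul_left_cancel₀ hne hxy
        have hrankmap : finrank K ↥(Submodule.map (LinearMap.mulLeft K (ℓ a)) W) = d :=
          (LinearEquiv.finrank_eq (Submodule.equivMapOfInjective _ hinj W)).symm.trans hd.symm
        haveI : FiniteDimensional K ↥(V a ⊓ U) :=
          Submodule.finiteDimensional_of_le (inf_le_left : V a ⊓ U ≤ V a)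
        have hrankinf : d ≤ finrank K ↥(V a ⊓ U) := by
          rw [← hrankmap]
          exact Submodule.finrank_mono hinf
        have hVa : finrank K ↥(V a) ≤ n + 1 :=
          le_trans (Submodule.finrank_map_le _ _) (R1_finrank_le K n)
        have heq := Submodule.finrank_sup_add_finrank_inf_eq (V a) U
        -- new span rank = d + 1
        have hspan : Submodule.span K (ℓ '' ↑(insert a T)) = (K ∙ ℓ a) ⊔ W := by
          rw [himg, Submodule.span_insert]
        have hdisj : (K ∙ ℓ a) ⊓ W = ⊥ :=
          ((Submodule.disjoint_span_singleton' hne).mpr hmem).symm.eq_bot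
        have hd' : finrank K ↥(Submodule.span K (ℓ '' ↑(insert a T))) = d + 1 := by
          rw [hspan]
          have := Submodule.finrank_sup_add_finrank_inf_eq (K ∙ ℓ a) W
          rw [hdisj, finrank_bot, finrank_span_singleton hne] at this
          omega
        refine ⟨by rw [hsupins]; infer_instance, ?_, ?_⟩
        · rw [hd']
          have hWle : Submodule.span K (ℓ '' ↑(insert a T)) ≤ R1 := by
            rw [Submodule.span_le]
            rintro _ ⟨i, _, rfl⟩
            exact hℓR1 i
          calc d + 1 = finrank K ↥(Submodule.span K (ℓ '' ↑(insert a T))) := hd'.symm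
            _ ≤ finrank K ↥R1 := Submodule.finrank_mono hWle
            _ ≤ n + 1 := R1_finrank_le K n
        · rw [hsupins, hd']
          have hkey : finrank K ↥(V a ⊔ U) + d ≤ (n + 1) + finrank K ↥U := by omega
          rcases Nat.eq_zero_or_pos d with h0 | h1
          · rw [h0] at hkey IHrank ⊢
            omega
          · obtain ⟨e, rfl⟩ : ∃ e, d = e + 1 := ⟨d - 1, by omega⟩
            simp only [Nat.add_sub_cancel] at IHrank ⊢
            nlinarith [hkey, IHrank]

/-- For `2 ≤ s` and `2s ≤ n`, for every choice of linear forms `ℓ_1,…,ℓ_{2s}`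
in `K[x_0,…,x_n]`, the subspace `Σ_{i=1}^{2s} ℓ_i·R_1` of `R_2` has dimension at most
`s(2n+1) − 2s(s−1)`, which is strictly less than `min{s(2n+1), C(n+2,2)}`
(i.e. `σ_s(Split_2(ℙⁿ))` is defective for `2 ≤ s ≤ n/2`). -/
theorem stmt14 (K : Type*) [Field K] [IsAlgClosed K] [CharZero K]
    (s n : ℕ) (hs : 2 ≤ s) (hn : 2 * s ≤ n) :
    (∀ ℓ : Fin (2 * s) → MvPolynomial (Fin (n + 1)) K,
      (∀ i, (ℓ i).IsHomogeneous 1) →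
      Module.finrank K ↥(⨆ i : Fin (2 * s),
          Submodule.map (LinearMap.mulLeft K (ℓ i))
            (homogeneousSubmodule (Fin (n + 1)) K 1))
        ≤ s * (2 * n + 1) - 2 * s * (s - 1)) ∧
    s * (2 * n + 1) - 2 * s * (s - 1) < min (s * (2 * n + 1)) ((n + 2).choose 2) := by
  obtain ⟨t, rfl⟩ : ∃ t, s = t + 1 := ⟨s - 1, by omega⟩
  have h2s : 2 * (t + 1) * ((t + 1) - 1) ≤ (t + 1) * (2 * n + 1) := by
    simp only [Nat.add_sub_cancel]
    nlinarith
  constructor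
  · intro ℓ hℓ
    obtain ⟨_, hdle, hrank⟩ := main_bound K n (2 * (t + 1)) ℓ hℓ Finset.univ
    have hsup : (⨆ i : Fin (2 * (t + 1)),
        Submodule.map (LinearMap.mulLeft K (ℓ i)) (homogeneousSubmodule (Fin (n + 1)) K 1))
        = ⨆ i ∈ (Finset.univ : Finset (Fin (2 * (t + 1)))),
            Submodule.map (LinearMap.mulLeft K (ℓ i))
              (homogeneousSubmodule (Fin (n + 1)) K 1) := by
      simp
    rw [hsup]
    set F := finrank K ↥(⨆ i ∈ (Finset.univ : Finset (Fin (2 * (t + 1)))),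
        Submodule.map (LinearMap.mulLeft K (ℓ i))
          (homogeneousSubmodule (Fin (n + 1)) K 1)) with hF
    set d := finrank K ↥(Submodule.span K (ℓ '' ↑(Finset.univ : Finset (Fin (2 * (t + 1))))))
      with hdd
    clear_value F d
    have hcard : d ≤ 2 * (t + 1) := by
      rw [hdd]
      have himg : ℓ '' ↑(Finset.univ : Finset (Fin (2 * (t + 1)))) = Set.range ℓ := by
        rw [Finset.coe_univ, Set.image_univ]
      rw [himg]
      simpa [Set.finrank] using finrank_range_le_card (R := K) ℓ
    rw [Nat.le_sub_iff_add_le h2s]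
    simp only [Nat.add_sub_cancel] at *
    rcases Nat.eq_zero_or_pos d with h0 | h1
    · subst h0
      simp only [Nat.mul_zero, Nat.zero_mul, Nat.add_zero] at hrank
      nlinarith
    · obtain ⟨e, rfl⟩ : ∃ e, d = e + 1 := ⟨d - 1, by omega⟩
      simp only [Nat.add_sub_cancel] at hrank
      zify at hrank hcard hn ⊢
      nlinarith [mul_nonneg
        (show (0:ℤ) ≤ 2 * ((t:ℤ) + 1) - ((e:ℤ) + 1) by linarith)
        (show (0:ℤ) ≤ 2 * (n:ℤ) + 3 - 2 * ((t:ℤ) + 1) - ((e:ℤ) + 1) by linarith)]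
  · rw [lt_min_iff]
    constructor
    · apply Nat.sub_lt
      · exact Nat.mul_pos (by omega) (by omega)
      · simp only [Nat.add_sub_cancel]
        exact Nat.mul_pos (by omega) (by omega)
    · have h2C : 2 * ((n + 2).choose 2) = (n + 2) * (n + 1) := by
        rw [Nat.choose_two_right]
        have he : 2 ∣ (n + 2) * (n + 2 - 1) := by
          have h21 : n + 2 - 1 = n + 1 := by omega
          rw [h21]
          rcases Nat.even_or_odd n with h | h
          · exact Dvd.dvd.mul_right (h.add even_two).two_dvd _
          · exact Dvd.dvd.mul_left (Odd.add_one h).two_dvd _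
        rw [Nat.mul_div_cancel' he]
        simp
      have hX : (t + 1) * (2 * n + 1) - 2 * (t + 1) * ((t + 1) - 1) + 2 * (t + 1) * ((t + 1) - 1)
          = (t + 1) * (2 * n + 1) := Nat.sub_add_cancel h2s
      set X := (t + 1) * (2 * n + 1) - 2 * (t + 1) * ((t + 1) - 1) with hXdef
      clear_value X
      simp only [Nat.add_sub_cancel] at hX
      have h2X : 2 * X < (n + 2) * (n + 1) := by
        zify at hX hn ⊢
        nlinarith [mul_pos
          (show (0:ℤ) < (n:ℤ) + 1 - 2 * ((t:ℤ) + 1) + 1 by linarith)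
          (show (0:ℤ) < (n:ℤ) + 2 - 2 * ((t:ℤ) + 1) by linarith)]
      omega
end
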